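/- arXiv:0808.4100 — 7 statements merged into one kernel-verified Lean document; each statement's English description precedes it below -/
import Mathlib

section
/- Let M be an n×n matrix over a commutative ring such that every row sum of M is zero (equivalently, M annihilates the column vector of all ones). Then the row vector (m_1, ..., m_n), where m_i is the i-th principal minor of M (the determinant of the submatrix obtained by deleting row i and column i), satisfies (m_1, ..., m_n) · M = 0. -/
lemma det_zero_of_rowsum_zero {m : Type*} [DecidableEq m] [Fintype m] [Nonempty m]
    {R : Type*} [CommRing R] (N : Matrix m m R) (h : ∀ i, ∑ j, N i j = 0) :
    N.det = 0 := by
  obtain ⟨i⟩ := ‹Nonempty m›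
  have := congrFun (congrFun (Matrix.adjugate_mul N) i)
  have key : ∑ j, ((N.adjugate * N) i j) = ∑ j, (N.det • (1 : Matrix m m R)) i j := by
    rw [Matrix.adjugate_mul]
  simp only [Matrix.mul_apply, Matrix.smul_apply, Matrix.one_apply, smul_eq_mul] at key
  rw [Finset.sum_comm] at key
  simp only [← Finset.mul_sum, h, mul_zero, Finset.sum_const_zero] at key
  rw [eq_comm, Finset.sum_eq_single i] at key
  · simpa using key
  · intro b _ hb; simp [hb.symm]
  · simp

/-- If a square matrix `M` over a commutative ring has all row sums zero
(i.e. annihilates the all-ones column vector), then the row vector of principal minors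
`m_i = det (M with row i and column i deleted)` satisfies `(m_1, …, m_n) · M = 0`. -/
theorem stmt0 {n : ℕ} {R : Type*} [CommRing R] (M : Matrix (Fin (n + 1)) (Fin (n + 1)) R)
    (hrow : ∀ i, ∑ j, M i j = 0) :
    Matrix.vecMul (fun i => (M.submatrix i.succAbove i.succAbove).det) M = 0 := by
  have hdet : M.det = 0 := det_zero_of_rowsum_zero M hrow
  -- adjugate entries are constant along each column (rows of adjugate all equal)
  have hadj : ∀ i j : Fin (n + 1), M.adjugate j i = M.adjugate i i := by
    intro i j
    rw [Matrix.adjugate_apply, Matrix.adjugate_apply]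
    have hsplit : (Pi.single j 1 : Fin (n + 1) → R) =
        (Pi.single j 1 - Pi.single i 1) + Pi.single i 1 :=
      (sub_add_cancel (Pi.single j 1 : Fin (n + 1) → R) (Pi.single i 1)).symm
    rw [hsplit, Matrix.det_updateRow_add]
    have hz : (M.updateRow i (Pi.single j 1 - Pi.single i 1)).det = 0 := by
      apply det_zero_of_rowsum_zero
      intro k
      rcases eq_or_ne k i with rfl | hk
      · simp [Matrix.updateRow_self, Pi.single_apply]
      · simp [Matrix.updateRow_ne hk, hrow k]
    rw [hz, zero_add]
  have hm : ∀ i : Fin (n + 1), (M.submatrix i.succAbove i.succAbove).det = M.adjugate i i := by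
    intro i
    rw [Matrix.adjugate_fin_succ_eq_det_submatrix]
    rw [← two_mul, pow_mul]
    simp
  funext j
  have : (Matrix.vecMul (fun i => (M.submatrix i.succAbove i.succAbove).det) M) j
      = (M.adjugate * M) j j := by
    rw [Matrix.vecMul, Matrix.mul_apply]
    simp only [dotProduct]
    congr 1; funext i
    rw [hm i, ← hadj i j]
  rw [this, Matrix.adjugate_mul, hdet]
  simp
end

section
/- Let D be a division ring and t a central variable. If M ∈ D^{n×n} and there exists a nonzero matrix P over D with (1−t)^n·(1−tM)^{-1} evaluable at t = 1 with nonzero value P for some n > 0 (where (1−tM)^{-1} is computed in D((t))), then P·M = P; in particular M has the eigenvalue 1. -/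
namespace Stmt3Aux


open Polynomial

variable {D : Type*} [DivisionRing D]

/-- Polynomial to power series (noncommutative version of `Polynomial.toPowerSeries`). -/
noncomputable def toPS (p : Polynomial D) : PowerSeries D :=
  PowerSeries.mk fun n => p.coeff n

lemma toPS_coeff (p : Polynomial D) (n : ℕ) : PowerSeries.coeff n (toPS p) = p.coeff n := by
  simp [toPS]

lemma toPS_injective : Function.Injective (toPS (D := D)) := by
  intro p q h
  ext n
  rw [← toPS_coeff p n, ← toPS_coeff q n, h]

lemma toPS_mul (p q : Polynomial D) : toPS (p * q) = toPS p * toPS q := by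
  ext n
  rw [toPS_coeff, PowerSeries.coeff_mul, Polynomial.coeff_mul]
  simp [toPS_coeff]

lemma toPS_one : toPS (1 : Polynomial D) = 1 := by
  ext n
  simp [toPS_coeff, Polynomial.coeff_one, PowerSeries.coeff_one]

lemma toPS_zero : toPS (0 : Polynomial D) = 0 := by
  ext n; simp [toPS_coeff]

lemma toPS_add (p q : Polynomial D) : toPS (p + q) = toPS p + toPS q := by
  ext n; simp [toPS_coeff]

lemma toPS_sub (p q : Polynomial D) : toPS (p - q) = toPS p - toPS q := by
  ext n; simp [toPS_coeff]

lemma toPS_X : toPS (Polynomial.X : Polynomial D) = PowerSeries.X := by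
  ext n
  simp [toPS_coeff, Polynomial.coeff_X, PowerSeries.coeff_X, eq_comm]

lemma toPS_C (a : D) : toPS (Polynomial.C a) = PowerSeries.C a := by
  ext n
  simp [toPS_coeff, Polynomial.coeff_C, PowerSeries.coeff_C]

lemma toPS_pow (p : Polynomial D) (n : ℕ) : toPS (p ^ n) = toPS p ^ n := by
  induction n with
  | zero => simpa using toPS_one
  | succ n ih => rw [pow_succ, pow_succ, toPS_mul, ih]

/-- eval at `1` is multiplicative, even noncommutatively. -/
lemma eval1_mul (p q : Polynomial D) : (p * q).eval 1 = p.eval 1 * q.eval 1 :=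
  Polynomial.eval₂_mul_noncomm _ _ fun _ => Commute.one_right _

/-- Right division by a nonzero polynomial over a division ring. -/
lemma divmod (b : Polynomial D) (hb : b ≠ 0) (a : Polynomial D) :
    ∃ q r : Polynomial D, a = b * q + r ∧ r.degree < b.degree := by
  classical
  generalize hn : a.natDegree = n
  induction n using Nat.strong_induction_on generalizing a with
  | _ n ih =>
    by_cases hlt : a.degree < b.degree
    · exact ⟨0, a, by rw [mul_zero, zero_add], hlt⟩
    have hle : b.degree ≤ a.degree := not_lt.mp hlt
    have ha : a ≠ 0 := by
      rintro rfl
      rw [Polynomial.degree_zero, le_bot_iff, Polynomial.degree_eq_bot] at hle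
      exact hb hle
    have hlb : b.leadingCoeff ≠ 0 := Polynomial.leadingCoeff_ne_zero.mpr hb
    have hla : a.leadingCoeff ≠ 0 := Polynomial.leadingCoeff_ne_zero.mpr ha
    set c : D := b.leadingCoeff⁻¹ * a.leadingCoeff with hc
    have hc0 : c ≠ 0 := mul_ne_zero (inv_ne_zero hlb) hla
    set e : ℕ := a.natDegree - b.natDegree with he
    set p : Polynomial D := b * Polynomial.monomial e c with hp
    have hbc : b.leadingCoeff * c = a.leadingCoeff := by
      rw [hc, ← mul_assoc, mul_inv_cancel₀ hlb, one_mul]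
    have hlcmul : b.leadingCoeff * (Polynomial.monomial e c).leadingCoeff ≠ 0 := by
      rw [Polynomial.leadingCoeff_monomial, hbc]; exact hla
    have hlp : p.leadingCoeff = a.leadingCoeff := by
      rw [hp, Polynomial.leadingCoeff_mul' hlcmul, Polynomial.leadingCoeff_monomial, hbc]
    have hp0 : p ≠ 0 := fun hz => hla (by rw [← hlp, hz, Polynomial.leadingCoeff_zero])
    have hnd : p.natDegree = a.natDegree := by
      rw [hp, Polynomial.natDegree_mul' hlcmul, Polynomial.natDegree_monomial]
      simp only [hc0, if_false]
      have : b.natDegree ≤ a.natDegree := Polynomial.natDegree_le_natDegree hle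
      omega
    have hdeg : a.degree = p.degree := by
      rw [Polynomial.degree_eq_natDegree ha, Polynomial.degree_eq_natDegree hp0, hnd]
    have hsub : (a - p).degree < a.degree :=
      Polynomial.degree_sub_lt hdeg ha hlp.symm
    by_cases ha' : a - p = 0
    · refine ⟨Polynomial.monomial e c, 0, ?_, ?_⟩
      · rw [add_zero, ← hp, ← sub_eq_zero]; exact ha'
      · rw [Polynomial.degree_zero]
        exact (bot_lt_iff_ne_bot.mpr (fun hz => hb (Polynomial.degree_eq_bot.mp hz)))
    · have hlt' : (a - p).natDegree < n := by
        rw [← hn]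
        exact Polynomial.natDegree_lt_natDegree ha' hsub
      obtain ⟨q', r, hqr, hr⟩ := ih _ hlt' (a - p) rfl
      refine ⟨Polynomial.monomial e c + q', r, ?_, hr⟩
      rw [mul_add, ← hp, add_assoc, ← hqr, add_sub_cancel]

/-- Right Ore condition for polynomials over a division ring. -/
lemma ore (a b : Polynomial D) (ha : a ≠ 0) (hb : b ≠ 0) :
    ∃ A B : Polynomial D, A ≠ 0 ∧ a * A = b * B := by
  generalize hn : b.natDegree = n
  induction n using Nat.strong_induction_on generalizing a b with
  | _ n ih =>
    obtain ⟨q, r, hqr, hr⟩ := divmod b hb a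
    by_cases hr0 : r = 0
    · refine ⟨1, q, one_ne_zero, ?_⟩
      rw [mul_one, hqr, hr0, add_zero]
    · have hrd : r.natDegree < n := by
        rw [← hn]; exact Polynomial.natDegree_lt_natDegree hr0 hr
      obtain ⟨A, B, hA, hab⟩ := ih _ hrd b r hb hr0 rfl
      refine ⟨B, q * B + A, ?_, ?_⟩
      · intro hz
        rw [hz, mul_zero] at hab
        rcases mul_eq_zero.mp hab with h | h
        · exact hb h
        · exact hA h
      · rw [hqr, add_mul, mul_add, ← mul_assoc, ← hab]

lemma eval1_zero_factor {p : Polynomial D} (h : p.eval 1 = 0) :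
    ∃ q, p = q * (Polynomial.X - Polynomial.C 1) := by
  obtain ⟨q, r, hqr, hr⟩ := divmod (Polynomial.X - Polynomial.C 1)
    (Polynomial.X_sub_C_ne_zero 1) p
  rw [Polynomial.degree_X_sub_C] at hr
  have hrC : r = Polynomial.C (r.coeff 0) :=
    Polynomial.eq_C_of_degree_le_zero (Nat.WithBot.lt_one_iff_le_zero.mp hr)
  have hev : p.eval 1 = r.coeff 0 := by
    conv_lhs => rw [hqr]
    rw [Polynomial.eval_add, eval1_mul, Polynomial.eval_sub, Polynomial.eval_X,
      Polynomial.eval_C, sub_self, zero_mul, zero_add]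
    conv_lhs => rw [hrC]
    rw [Polynomial.eval_C]
  rw [h] at hev
  have hr0 : r = 0 := by rw [hrC, ← hev, Polynomial.C_0]
  refine ⟨q, ?_⟩
  rw [hqr, hr0, add_zero]
  rw [sub_mul, mul_sub, Polynomial.X_mul, Polynomial.C_1, one_mul, mul_one]

lemma mul_cancel_right' {R : Type*} [Ring R] [NoZeroDivisors R] {a c b : R} (hb : b ≠ 0)
    (h : a * b = c * b) : a = c := by
  have h2 : (a - c) * b = 0 := by rw [sub_mul, h, sub_self]
  rcases mul_eq_zero.mp h2 with h1 | h1
  · exact sub_eq_zero.mp h1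
  · exact absurd h1 hb

/-- Strip factors of `X - 1` from a common multiple until it is nonvanishing at 1. -/
lemma strip (a b : Polynomial D) (ha : a.eval 1 ≠ 0) (hb : b.eval 1 ≠ 0) :
    ∀ (n : ℕ) (A B : Polynomial D), A ≠ 0 → a * A = b * B → A.natDegree = n →
    ∃ A' B' : Polynomial D, A' ≠ 0 ∧ a * A' = b * B' ∧ (a * A').eval 1 ≠ 0 := by
  intro n
  induction n using Nat.strong_induction_on with
  | _ n ih =>
    intro A B hA hab hn
    by_cases h : (a * A).eval 1 ≠ 0
    · exact ⟨A, B, hA, hab, h⟩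
    push_neg at h
    have hA1 : A.eval 1 = 0 := by
      rw [eval1_mul] at h
      exact (mul_eq_zero.mp h).resolve_left ha
    have hB1 : B.eval 1 = 0 := by
      have h2 : (b * B).eval 1 = 0 := by rw [← hab]; exact h
      rw [eval1_mul] at h2
      exact (mul_eq_zero.mp h2).resolve_left hb
    obtain ⟨A₁, hA₁⟩ := eval1_zero_factor hA1
    obtain ⟨B₁, hB₁⟩ := eval1_zero_factor hB1
    have hX : (Polynomial.X - Polynomial.C 1 : Polynomial D) ≠ 0 := Polynomial.X_sub_C_ne_zero 1
    have hcancel : a * A₁ = b * B₁ := by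
      apply mul_cancel_right' hX
      rw [mul_assoc, mul_assoc, ← hA₁, ← hB₁, hab]
    have hA₁0 : A₁ ≠ 0 := by
      rintro rfl
      rw [zero_mul] at hA₁
      exact hA hA₁
    have hdeg : A₁.natDegree < n := by
      have h1 : A.natDegree = A₁.natDegree + 1 := by
        have hlc : A₁.leadingCoeff * (Polynomial.X - Polynomial.C 1 : Polynomial D).leadingCoeff ≠ 0 := by
          rw [(Polynomial.monic_X_sub_C (1 : D)).leadingCoeff, mul_one]
          exact Polynomial.leadingCoeff_ne_zero.mpr hA₁0
        rw [hA₁, Polynomial.natDegree_mul' hlc, Polynomial.natDegree_X_sub_C]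
      omega
    exact ih _ hdeg A₁ B₁ hA₁0 hcancel rfl


noncomputable def toPSHom : Polynomial D →+* PowerSeries D where
  toFun := toPS
  map_one' := toPS_one
  map_mul' := toPS_mul
  map_zero' := toPS_zero
  map_add' := toPS_add

lemma toPS_sum {ι : Type*} (s : Finset ι) (f : ι → Polynomial D) :
    toPS (∑ x ∈ s, f x) = ∑ x ∈ s, toPS (f x) :=
  map_sum toPSHom f s

end Stmt3Aux

/-- A power series `S ∈ D[[t]]` (lying in `D(t)`) is *evaluable at `t = 1` with value `v`*
if it can be written `S = Q R⁻¹` with polynomials `Q, R ∈ D[t]`, `R(1) ≠ 0`, and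
`v = Q(1) R(1)⁻¹`. (Writing `S = (1−t)^m Q' R'⁻¹` with `Q'(1), R'(1) ≠ 0`, this holds
exactly when `m ≥. 0`, the value being `Q'(1)R'(1)⁻¹` if `m = 0` and `0` if `m > 0`.) -/
def EvalAtOne {D : Type*} [DivisionRing D] (S : PowerSeries D) (v : D) : Prop :=
  ∃ Q R : Polynomial D, Polynomial.eval 1 R ≠ 0 ∧
    S * PowerSeries.mk (fun m => R.coeff m) = PowerSeries.mk (fun m => Q.coeff m) ∧
    v = Polynomial.eval 1 Q * (Polynomial.eval 1 R)⁻¹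

namespace Stmt3Aux
variable {D : Type*} [DivisionRing D]

lemma evalAtOne_def {S : PowerSeries D} {v : D} :
    EvalAtOne S v ↔ ∃ Q R : Polynomial D, R.eval 1 ≠ 0 ∧
      S * toPS R = toPS Q ∧ v = Q.eval 1 * (R.eval 1)⁻¹ := Iff.rfl

lemma evalAtOne_mul_X {S : PowerSeries D} {v : D} (h : EvalAtOne S v) :
    EvalAtOne (S * PowerSeries.X) v := by
  rw [evalAtOne_def] at h ⊢
  obtain ⟨Q, R, hR, hQR, hv⟩ := h
  refine ⟨Q * Polynomial.X, R, hR, ?_, ?_⟩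
  · rw [toPS_mul, toPS_X, mul_assoc, ← (PowerSeries.commute_X (toPS R)).eq, ← mul_assoc, hQR]
  · rw [hv, eval1_mul, Polynomial.eval_X, mul_one]

lemma conj_val {q r c : D} (hc : c ≠ 0) : q * c * (c⁻¹ * (r * c)) = q * r * c := by
  rw [mul_assoc q c, ← mul_assoc c c⁻¹, mul_inv_cancel₀ hc, one_mul, ← mul_assoc]

lemma evalAtOne_mul_C {S : PowerSeries D} {v : D} (h : EvalAtOne S v) (c : D) :
    EvalAtOne (S * PowerSeries.C c) (v * c) := by
  rw [evalAtOne_def] at h ⊢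
  obtain ⟨Q, R, hR, hQR, hv⟩ := h
  by_cases hc : c = 0
  · subst hc
    refine ⟨0, 1, by simp, ?_, by simp⟩
    rw [map_zero, mul_zero, zero_mul, toPS_zero]
  · refine ⟨Q * Polynomial.C c, Polynomial.C c⁻¹ * R * Polynomial.C c, ?_, ?_, ?_⟩
    · rw [eval1_mul, eval1_mul, Polynomial.eval_C, Polynomial.eval_C]
      exact mul_ne_zero (mul_ne_zero (inv_ne_zero hc) hR) hc
    · have hkey : PowerSeries.C c * (PowerSeries.C c⁻¹ * toPS R * PowerSeries.C c) =
          toPS R * PowerSeries.C c := by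
        rw [← mul_assoc, ← mul_assoc, ← map_mul, mul_inv_cancel₀ hc, map_one, one_mul]
      rw [toPS_mul, toPS_mul, toPS_C, toPS_C, mul_assoc S, hkey, ← mul_assoc, hQR,
        toPS_mul, toPS_C]
    · rw [hv, eval1_mul, eval1_mul, eval1_mul, Polynomial.eval_C, Polynomial.eval_C,
        mul_inv_rev, mul_inv_rev, inv_inv]
      exact (conj_val hc).symm

lemma common : ∀ (n : ℕ) (T : Fin n → PowerSeries D) (v : Fin n → D),
    (∀ l, EvalAtOne (T l) (v l)) →
    ∃ R : Polynomial D, R.eval 1 ≠ 0 ∧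
      ∀ l, ∃ Q : Polynomial D, T l * toPS R = toPS Q ∧ v l = Q.eval 1 * (R.eval 1)⁻¹ := by
  intro n
  induction n with
  | zero => exact fun T v _ => ⟨1, by simp, fun l => l.elim0⟩
  | succ n ih =>
    intro T v h
    obtain ⟨R₀, hR₀, hQ₀⟩ := ih (fun l => T l.succ) (fun l => v l.succ) (fun l => h l.succ)
    obtain ⟨Q₁, R₁, hR₁, hQR₁, hv₁⟩ := (evalAtOne_def).mp (h 0)
    have hR₀0 : R₀ ≠ 0 := fun hh => hR₀ (by simp [hh])
    have hR₁0 : R₁ ≠ 0 := fun hh => hR₁ (by simp [hh])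
    obtain ⟨A, B, hA, hab⟩ := ore R₀ R₁ hR₀0 hR₁0
    obtain ⟨A', B', hA', hab', hevR⟩ := strip R₀ R₁ hR₀ hR₁ A.natDegree A B hA hab rfl
    have hA'1 : A'.eval 1 ≠ 0 := by
      intro hz; apply hevR; rw [eval1_mul, hz, mul_zero]
    have hB'1 : B'.eval 1 ≠ 0 := by
      intro hz; apply hevR; rw [hab', eval1_mul, hz, mul_zero]
    refine ⟨R₀ * A', hevR, fun l => ?_⟩
    refine Fin.cases ?_ ?_ l
    · refine ⟨Q₁ * B', ?_, ?_⟩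
      · rw [hab', toPS_mul, ← mul_assoc, hQR₁, ← toPS_mul]
      · rw [hv₁, hab', eval1_mul, eval1_mul, mul_inv_rev, mul_assoc,
          ← mul_assoc (B'.eval 1), mul_inv_cancel₀ hB'1, one_mul]
    · intro l
      obtain ⟨Q, hQ, hval⟩ := hQ₀ l
      refine ⟨Q * A', ?_, ?_⟩
      · rw [toPS_mul, ← mul_assoc, hQ, ← toPS_mul]
      · rw [hval, eval1_mul, eval1_mul, mul_inv_rev, mul_assoc,
          ← mul_assoc (A'.eval 1), mul_inv_cancel₀ hA'1, one_mul]

end Stmt3Aux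

open Stmt3Aux in
/-- Let `D` be a division ring, `M ∈ D^{k×k}`, and `S = (1 − tM)⁻¹` (computed
over `D[[t]]`, `t` a central variable). If for some `m > 0` the matrix `(1−t)^m S` is
evaluable at `t = 1` with nonzero value `P` over `D`, then `P M = P`; in particular `M` has
the eigenvalue 1. -/
theorem stmt3 {k : ℕ} {D : Type*} [DivisionRing D] (M : Matrix (Fin k) (Fin k) D)
    (S : Matrix (Fin k) (Fin k) (PowerSeries D))
    (hS1 : S * (1 - Matrix.of fun i j => PowerSeries.X * PowerSeries.C (M i j)) = 1)
    (hS2 : (1 - Matrix.of fun i j => PowerSeries.X * PowerSeries.C (M i j)) * S = 1)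
    (m : ℕ) (hm : 0 < m) (P : Matrix (Fin k) (Fin k) D) (hP : P ≠ 0)
    (hev : ∀ i j, EvalAtOne ((1 - PowerSeries.X) ^ m * S i j) (P i j)) :
    P * M = P ∧ ∃ v : Fin k → D, v ≠ 0 ∧ Matrix.vecMul v M = v := by
  classical
  have hpow0 : ((1 - Polynomial.X : Polynomial D) ^ m).eval 1 = 0 := by
    obtain ⟨m', rfl⟩ := Nat.exists_eq_succ_of_ne_zero hm.ne'
    rw [pow_succ, eval1_mul, Polynomial.eval_sub, Polynomial.eval_one, Polynomial.eval_X,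
      sub_self, mul_zero]
  have hPM : P * M = P := by
    ext i j
    have h := Matrix.ext_iff.mpr hS1 i j
    rw [Matrix.mul_apply] at h
    simp only [Matrix.sub_apply, Matrix.one_apply, Matrix.of_apply, mul_sub,
      Finset.sum_sub_distrib, mul_ite, mul_one, mul_zero, Finset.sum_ite_eq',
      Finset.mem_univ, if_true] at h
    have key : (1 - PowerSeries.X) ^ m * S i j
        - ∑ l : Fin k, (1 - PowerSeries.X) ^ m * S i l * PowerSeries.X *
            PowerSeries.C (M l j)
        = (1 - PowerSeries.X) ^ m * (if i = j then 1 else 0) := by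
      have h2 := congrArg (fun z => (1 - PowerSeries.X : PowerSeries D) ^ m * z) h
      simp only [mul_sub, Finset.mul_sum, ← mul_assoc] at h2
      exact h2
    have hUev : ∀ l : Fin (k + 1),
        EvalAtOne
          ((Fin.cons ((1 - PowerSeries.X) ^ m * S i j)
            (fun l => (1 - PowerSeries.X) ^ m * S i l * PowerSeries.X *
              PowerSeries.C (M l j)) : Fin (k + 1) → PowerSeries D) l)
          ((Fin.cons (P i j) (fun l => P i l * M l j) : Fin (k + 1) → D) l) := by
      intro l
      refine Fin.cases ?_ ?_ l
      · simpa using hev i j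
      · intro l
        simp only [Fin.cons_succ]
        exact evalAtOne_mul_C (evalAtOne_mul_X (hev i l)) (M l j)
    obtain ⟨R, hR, hQ⟩ := common (k + 1) _ _ hUev
    choose Q hQeq hQval using hQ
    have hδ : toPS (if i = j then 1 else 0 : Polynomial D)
        = (if i = j then (1 : PowerSeries D) else 0) := by
      split
      · exact toPS_one
      · exact toPS_zero
    have keyR : toPS (Q 0 - ∑ l : Fin k, Q l.succ) =
        toPS ((1 - Polynomial.X) ^ m * (if i = j then 1 else 0) * R) := by
      rw [toPS_sub, toPS_sum, toPS_mul, toPS_mul, toPS_pow, toPS_sub, toPS_one, toPS_X, hδ]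
      have e0 : toPS (Q 0) = (1 - PowerSeries.X) ^ m * S i j * toPS R := by
        have h3 := hQeq 0; rw [Fin.cons_zero] at h3; exact h3.symm
      have es : ∀ l : Fin k, toPS (Q l.succ) =
          (1 - PowerSeries.X) ^ m * S i l * PowerSeries.X * PowerSeries.C (M l j) *
            toPS R := by
        intro l; have h3 := hQeq l.succ; rw [Fin.cons_succ] at h3; exact h3.symm
      rw [e0, Finset.sum_congr rfl (fun l _ => es l), ← Finset.sum_mul, ← sub_mul, key]
    have E : Q 0 - ∑ l : Fin k, Q l.succ
        = (1 - Polynomial.X) ^ m * (if i = j then 1 else 0) * R := toPS_injective keyR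
    have hE : (Q 0).eval 1 = ∑ l : Fin k, (Q l.succ).eval 1 := by
      have h4 := congrArg (Polynomial.eval 1) E
      rw [Polynomial.eval_sub, Polynomial.eval_finset_sum, eval1_mul, eval1_mul, hpow0,
        zero_mul, zero_mul] at h4
      exact sub_eq_zero.mp h4
    rw [Matrix.mul_apply]
    have hv0 : P i j = (Q 0).eval 1 * (R.eval 1)⁻¹ := by
      have h5 := hQval 0; rwa [Fin.cons_zero] at h5
    have hvs : ∀ l : Fin k, P i l * M l j = (Q l.succ).eval 1 * (R.eval 1)⁻¹ := by
      intro l; have h5 := hQval l.succ; rwa [Fin.cons_succ] at h5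
    calc ∑ l : Fin k, P i l * M l j
        = ∑ l : Fin k, (Q l.succ).eval 1 * (R.eval 1)⁻¹ :=
          Finset.sum_congr rfl fun l _ => hvs l
      _ = (∑ l : Fin k, (Q l.succ).eval 1) * (R.eval 1)⁻¹ := (Finset.sum_mul _ _ _).symm
      _ = (Q 0).eval 1 * (R.eval 1)⁻¹ := by rw [← hE]
      _ = P i j := hv0.symm
  refine ⟨hPM, ?_⟩
  have hex : ∃ i j, P i j ≠ 0 := by
    by_contra hcon
    push_neg at hcon
    exact hP (Matrix.ext fun i j => (hcon i j).trans (Matrix.zero_apply i j).symm)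
  obtain ⟨i, j0, hij⟩ := hex
  refine ⟨fun l => P i l, fun hz => hij (congrFun hz j0), ?_⟩
  funext j
  have h := Matrix.ext_iff.mpr hPM i j
  rw [Matrix.mul_apply] at h
  simpa [Matrix.vecMul, dotProduct] using h
end

section
/- Let D be a division ring with elements a, b, c, d satisfying a + b = 1 and c + d = 1, with 1−a, 1−d, and c invertible. Set P₁ = 1 + b(1−d)^{-1} and P₂ = 1 + c(1−a)^{-1}. Then P₁ and P₂ are invertible and P₁^{-1}·a + P₂^{-1}·c = P₁^{-1} and P₁^{-1}·b + P₂^{-1}·d = P₂^{-1}; that is, the row vector (P₁^{-1}, P₂^{-1}) is fixed by the 2×2 matrix [[a,b],[c,d]]. -/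
/-- In a division ring with `a + b = 1`, `c + d = 1`, `b ≠ 0`, `c ≠ 0`, and with
`P₁ = 1 + b(1−d)⁻¹`, `P₂ = 1 + c(1−a)⁻¹` nonzero, the vector `(P₁⁻¹, P₂⁻¹)` is fixed by the
matrix `[[a,b],[c,d]]`: `P₁⁻¹ a + P₂⁻¹ c = P₁⁻¹` and `P₁⁻¹ b + P₂⁻¹ d = P₂⁻¹`. -/
theorem stmt6 {D : Type*} [DivisionRing D] (a b c d : D)
    (hab : a + b = 1) (hcd : c + d = 1) (hb : b ≠ 0) (hc : c ≠ 0)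
    (hP1 : 1 + b * (1 - d)⁻¹ ≠ 0) (hP2 : 1 + c * (1 - a)⁻¹ ≠ 0) :
    IsUnit (1 + b * (1 - d)⁻¹) ∧ IsUnit (1 + c * (1 - a)⁻¹) ∧
      (1 + b * (1 - d)⁻¹)⁻¹ * a + (1 + c * (1 - a)⁻¹)⁻¹ * c = (1 + b * (1 - d)⁻¹)⁻¹ ∧
      (1 + b * (1 - d)⁻¹)⁻¹ * b + (1 + c * (1 - a)⁻¹)⁻¹ * d = (1 + c * (1 - a)⁻¹)⁻¹ := by
  have h1a : (1 : D) - a = b := by rw [← hab, add_sub_cancel_left]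
  have h1d : (1 : D) - d = c := by rw [← hcd, add_sub_cancel_right]
  rw [h1d] at hP1 ⊢
  rw [h1a] at hP2 ⊢
  have hP1' : 1 + b * c⁻¹ = (b + c) * c⁻¹ := by
    rw [add_mul, mul_inv_cancel₀ hc, add_comm]
  have hP2' : 1 + c * b⁻¹ = (b + c) * b⁻¹ := by
    rw [add_mul, mul_inv_cancel₀ hb]
  have hs : b + c ≠ 0 := fun h => hP1 (by rw [hP1', h, zero_mul])
  have hi1 : (1 + b * c⁻¹)⁻¹ = c * (b + c)⁻¹ := by rw [hP1', mul_inv_rev, inv_inv]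
  have hi2 : (1 + c * b⁻¹)⁻¹ = b * (b + c)⁻¹ := by rw [hP2', mul_inv_rev, inv_inv]
  have hsb : (b + c)⁻¹ * b = 1 - (b + c)⁻¹ * c := by
    rw [eq_sub_iff_add_eq, ← mul_add, inv_mul_cancel₀ hs]
  have key : c * (b + c)⁻¹ * b = b * (b + c)⁻¹ * c := by
    rw [mul_assoc, hsb, mul_sub, mul_one, ← mul_assoc, sub_eq_iff_eq_add]
    rw [← add_mul, ← add_mul, mul_inv_cancel₀ hs, one_mul]
  have ha : a = 1 - b := by rw [← hab, add_sub_cancel_right]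
  have hd : d = 1 - c := by rw [← hcd, add_sub_cancel_left]
  refine ⟨isUnit_iff_ne_zero.mpr hP1, isUnit_iff_ne_zero.mpr hP2, ?_, ?_⟩
  · rw [hi1, hi2, ha, mul_sub, mul_one, ← key, sub_add_cancel]
  · rw [hi1, hi2, hd, key, ← mul_add, add_comm c (1 - c), sub_add_cancel, mul_one]
end

section
/- Let R be a ring, M an n×n matrix over the noncommutative power series ring R⟨⟨A⟩⟩ whose (i,j) entry is the single letter a_ij (the generic matrix over the free algebra on n² letters). For each i, let C_i be the characteristic series of nonempty paths from i to i not passing through i internally, and P_ij the characteristic series of paths from i to j not returning to i after the start. Then the matrix identity (1−M)^{-1} = D(C₁*, ..., C_n*) · (P_ij) holds in Q⟨⟨a_ij⟩⟩, where C* = (1−C)^{-1} and D denotes the diagonal matrix. Equivalently, the (i,j) entry of (1−M)^{-1} equals (1−C_i)^{-1}·P_ij. -/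
/-! Setup: the ring `ℚ⟨⟨a_ij⟩⟩` of noncommutative power series in the `n²` letters
`a_ij` (`1 ≤ i,j ≤ n`) is realized via its graded embedding into `ℚ⟨a_ij⟩[[t]]`,
sending a letter to `t·a_ij`: a noncommutative series is determined by its homogeneous
components, which are noncommutative polynomials, i.e. elements of the free algebra.
Words over the alphabet `{a_ij}` are lists of edges `(i,j)` of the complete digraph
on the vertex set `Fin n`, identified with paths. -/

/-- An edge of the complete digraph on `Fin n`, i.e. a letter `a_ij`. -/
abbrev Edge (n : ℕ) := Fin n × Fin n

/-- `isPath i j w = true` iff the word `w` is a path from `i` to `j`. -/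
def isPath {n : ℕ} (i j : Fin n) : List (Edge n) → Bool
  | [] => decide (i = j)
  | e :: rest => decide (i = e.1) && isPath e.2 j rest

/-- `firstRet i v w = true` iff `w` is a nonempty path from `v` which reaches `i`
exactly at its last step (and never before).  The code `C_i` (nonempty paths `i → i`
not passing through `i` internally) is `firstRet i i`. -/
def firstRet {n : ℕ} (i v : Fin n) : List (Edge n) → Bool
  | [] => false
  | e :: rest =>
      decide (v = e.1) && (if e.2 = i then rest.isEmpty else firstRet i e.2 rest)

/-- `avoidTo i v j w = true` iff `w` is a path from `v` to `j` never visiting `i`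
after its starting point.  `P_ij` is `avoidTo i i j` (so `P_ii = {ε}`). -/
def avoidTo {n : ℕ} (i v j : Fin n) : List (Edge n) → Bool
  | [] => decide (v = j)
  | e :: rest => decide (v = e.1) && !decide (e.2 = i) && avoidTo i e.2 j rest

/-- `avoidFrom i v w = true` iff `w` is a path from `v` never visiting `i` after its
starting point.  `P_i = ∑_j P_ij` is `avoidFrom i i`. -/
def avoidFrom {n : ℕ} (i v : Fin n) : List (Edge n) → Bool
  | [] => true
  | e :: rest => decide (v = e.1) && !decide (e.2 = i) && avoidFrom i e.2 rest

/-- The element of the free algebra corresponding to a word. -/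
noncomputable def wordOf {n : ℕ} (w : List (Edge n)) : FreeAlgebra ℚ (Edge n) :=
  (w.map (FreeAlgebra.ι ℚ)).prod

/-- The characteristic series (an element of `ℚ⟨⟨a_ij⟩⟩`) of the language of words
satisfying `p`: its homogeneous component of degree `m` is the sum of all words of
length `m` in the language. -/
noncomputable def ser {n : ℕ} (p : List (Edge n) → Bool) :
    PowerSeries (FreeAlgebra ℚ (Edge n)) :=
  PowerSeries.mk fun m =>
    ∑ w : List.Vector (Edge n) m, if p w.toList then wordOf w.toList else 0

/-- The generic `n × n` matrix `M = (a_ij)` over `ℚ⟨⟨a_ij⟩⟩`. -/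
noncomputable def genM (n : ℕ) :
    Matrix (Fin n) (Fin n) (PowerSeries (FreeAlgebra ℚ (Edge n))) :=
  Matrix.of fun i j => PowerSeries.X * PowerSeries.C (FreeAlgebra.ι ℚ (i, j))

section Aux
variable {n : ℕ}

lemma wordOf_append (u v : List (Edge n)) : wordOf (u ++ v) = wordOf u * wordOf v := by
  simp [wordOf]

lemma isPath_append {a b c : Fin n} {u v : List (Edge n)} (hu : isPath a b u = true)
    (hv : isPath b c v = true) : isPath a c (u ++ v) = true := by
  induction u generalizing a with
  | nil => simp [isPath] at hu; subst hu; exact hv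
  | cons e rest ih =>
    simp only [isPath, List.cons_append, Bool.and_eq_true, decide_eq_true_eq] at hu ⊢
    exact ⟨hu.1, ih hu.2⟩

/-- whether the path visits `i` strictly after its start -/
def visits (i : Fin n) (w : List (Edge n)) : Bool := w.any (fun e => decide (e.2 = i))

lemma avoid_path {i v j : Fin n} {w : List (Edge n)} (h : avoidTo i v j w = true) :
    isPath v j w = true := by
  induction w generalizing v with
  | nil => simpa [avoidTo, isPath] using h
  | cons e rest ih =>
    simp only [avoidTo, Bool.and_eq_true, decide_eq_true_eq] at h
    simp only [isPath, Bool.and_eq_true, decide_eq_true_eq]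
    exact ⟨h.1.1, ih h.2⟩

lemma avoid_not_visits {i v j : Fin n} {w : List (Edge n)} (h : avoidTo i v j w = true) :
    visits i w = false := by
  induction w generalizing v with
  | nil => rfl
  | cons e rest ih =>
    simp only [avoidTo, Bool.and_eq_true, decide_eq_true_eq, Bool.not_eq_true',
      decide_eq_false_iff_not] at h
    simp only [visits, List.any_cons, Bool.or_eq_false_iff, decide_eq_false_iff_not]
    exact ⟨h.1.2, by simpa [visits] using ih h.2⟩

lemma path_avoid {i v j : Fin n} {w : List (Edge n)} (h : isPath v j w = true)
    (hv : visits i w = false) : avoidTo i v j w = true := by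
  induction w generalizing v with
  | nil => simpa [avoidTo, isPath] using h
  | cons e rest ih =>
    simp only [isPath, Bool.and_eq_true, decide_eq_true_eq] at h
    simp only [visits, List.any_cons, Bool.or_eq_false_iff, decide_eq_false_iff_not] at hv
    simp only [avoidTo, Bool.and_eq_true, decide_eq_true_eq, Bool.not_eq_true',
      decide_eq_false_iff_not]
    exact ⟨⟨h.1, hv.1⟩, ih h.2 (by simpa [visits] using hv.2)⟩

lemma visits_end {i v : Fin n} {w : List (Edge n)} (h : isPath v i w = true) (hw : w ≠ []) :
    visits i w = true := by
  induction w generalizing v with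
  | nil => exact absurd rfl hw
  | cons e rest ih =>
    simp only [isPath, Bool.and_eq_true, decide_eq_true_eq] at h
    simp only [visits, List.any_cons, Bool.or_eq_true, decide_eq_true_eq]
    rcases rest with _ | ⟨f, rest'⟩
    · left; simpa [isPath] using h.2
    · right; simpa [visits] using ih h.2 (by simp)

lemma firstRet_path {i v : Fin n} {w : List (Edge n)} (h : firstRet i v w = true) :
    isPath v i w = true := by
  induction w generalizing v with
  | nil => simp [firstRet] at h
  | cons e rest ih =>
    simp only [firstRet, Bool.and_eq_true, decide_eq_true_eq] at h
    simp only [isPath, Bool.and_eq_true, decide_eq_true_eq]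
    refine ⟨h.1, ?_⟩
    by_cases he : e.2 = i
    · rw [he]
      have : rest = [] := by
        have := h.2; rw [if_pos he] at this; exact List.isEmpty_iff.mp this
      simp [this, isPath]
    · have := h.2; rw [if_neg he] at this; exact ih this

lemma firstRet_ne_nil {i v : Fin n} {w : List (Edge n)} (h : firstRet i v w = true) : w ≠ [] := by
  rintro rfl; simp [firstRet] at h

end Aux
section Splits
variable {n : ℕ}

/-- whether the path visits `i` strictly after its start and strictly before its end -/
def visitsB (i : Fin n) : List (Edge n) → Bool
  | [] => false
  | e :: rest => (!rest.isEmpty && decide (e.2 = i)) || visitsB i rest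

lemma firstRet_not_visitsB {i v : Fin n} {w : List (Edge n)} (h : firstRet i v w = true) :
    visitsB i w = false := by
  induction w generalizing v with
  | nil => rfl
  | cons e rest ih =>
    simp only [firstRet, Bool.and_eq_true, decide_eq_true_eq] at h
    by_cases he : e.2 = i
    · have : rest = [] := by
        have := h.2; rw [if_pos he] at this; exact List.isEmpty_iff.mp this
      subst this; rfl
    · have hr := h.2; rw [if_neg he] at hr
      simp [visitsB, he, ih hr]

lemma path_not_visitsB_firstRet {i v : Fin n} {w : List (Edge n)} (h : isPath v i w = true)
    (hw : w ≠ []) (hb : visitsB i w = false) : firstRet i v w = true := by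
  induction w generalizing v with
  | nil => exact absurd rfl hw
  | cons e rest ih =>
    simp only [isPath, Bool.and_eq_true, decide_eq_true_eq] at h
    simp only [visitsB, Bool.or_eq_false_iff, Bool.and_eq_false_iff] at hb
    simp only [firstRet, Bool.and_eq_true, decide_eq_true_eq]
    refine ⟨h.1, ?_⟩
    by_cases he : e.2 = i
    · rw [if_pos he]
      rcases hb.1 with h1 | h1
      · simpa using h1
      · simp [he] at h1
    · rw [if_neg he]
      have hr : rest ≠ [] := by
        rintro rfl; simp [isPath] at h; exact he h.2
      exact ih h.2 hr hb.2

lemma visitsB_append {i c : Fin n} {u z : List (Edge n)} (h : isPath c i u = true)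
    (hu : u ≠ []) (hz : z ≠ []) : visitsB i (u ++ z) = true := by
  induction u generalizing c with
  | nil => exact absurd rfl hu
  | cons e rest ih =>
    simp only [isPath, Bool.and_eq_true, decide_eq_true_eq] at h
    rcases rest with _ | ⟨f, rest'⟩
    · have he : e.2 = i := by simpa [isPath] using h.2
      simp [visitsB, he, List.isEmpty_iff, hz]
    · simp only [List.cons_append, visitsB, Bool.or_eq_true]
      have hh := ih h.2 (by simp)
      simp only [List.cons_append, visitsB, Bool.or_eq_true] at hh
      exact Or.inr hh

/-- split a word after its first visit to `i` -/
def splitFirst (i : Fin n) : List (Edge n) → List (Edge n) × List (Edge n)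
  | [] => ([], [])
  | e :: rest =>
      if e.2 = i then ([e], rest)
      else ((e :: (splitFirst i rest).1), (splitFirst i rest).2)

lemma splitFirst_append (i : Fin n) (w : List (Edge n)) :
    (splitFirst i w).1 ++ (splitFirst i w).2 = w := by
  induction w with
  | nil => rfl
  | cons e rest ih =>
    by_cases he : e.2 = i <;> simp [splitFirst, he, ih]

lemma splitFirst_spec {i v : Fin n} {w : List (Edge n)} (h : isPath v i w = true)
    (hw : w ≠ []) :
    firstRet i v (splitFirst i w).1 = true ∧ isPath i i (splitFirst i w).2 = true := by
  induction w generalizing v with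
  | nil => exact absurd rfl hw
  | cons e rest ih =>
    simp only [isPath, Bool.and_eq_true, decide_eq_true_eq] at h
    by_cases he : e.2 = i
    · simp only [splitFirst, if_pos he]
      constructor
      · simp [firstRet, h.1, he]
      · simpa [he] using h.2
    · have hr : rest ≠ [] := by
        rintro rfl; simp [isPath] at h; exact he h.2
      obtain ⟨h1, h2⟩ := ih h.2 hr
      simp only [splitFirst, if_neg he]
      refine ⟨?_, h2⟩
      simp [firstRet, h.1, he, h1]

lemma splitFirst_eq {i v : Fin n} {u : List (Edge n)} (h : firstRet i v u = true)
    (z : List (Edge n)) : splitFirst i (u ++ z) = (u, z) := by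
  induction u generalizing v with
  | nil => simp [firstRet] at h
  | cons e rest ih =>
    simp only [firstRet, Bool.and_eq_true, decide_eq_true_eq] at h
    by_cases he : e.2 = i
    · have : rest = [] := by
        have := h.2; rw [if_pos he] at this; exact List.isEmpty_iff.mp this
      subst this
      simp [splitFirst, he]
    · have hr := h.2; rw [if_neg he] at hr
      simp [splitFirst, he, ih hr]

end Splits
section Splits2
variable {n : ℕ}

/-- split a word at its last visit to `i` -/
def splitLast (i : Fin n) : List (Edge n) → List (Edge n) × List (Edge n)
  | [] => ([], [])
  | e :: rest =>
      if decide (e.2 = i) || visits i rest then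
        (e :: (splitLast i rest).1, (splitLast i rest).2)
      else ([], e :: rest)

lemma splitLast_append (i : Fin n) (w : List (Edge n)) :
    (splitLast i w).1 ++ (splitLast i w).2 = w := by
  induction w with
  | nil => rfl
  | cons e rest ih =>
    by_cases hc : (decide (e.2 = i) || visits i rest) = true
    · simp [splitLast, hc, ih]
    · simp [splitLast, Bool.or_eq_true, not_or] at hc
      simp [splitLast, hc.1, hc.2]

lemma splitLast_of_not_visits {i : Fin n} {w : List (Edge n)} (h : visits i w = false) :
    splitLast i w = ([], w) := by
  cases w with
  | nil => rfl
  | cons e rest =>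
    simp only [visits, List.any_cons, Bool.or_eq_false_iff] at h
    simp [splitLast, h.1, show visits i rest = false from h.2]

lemma splitLast_spec {i v j : Fin n} {w : List (Edge n)} (h : isPath v j w = true) :
    ((splitLast i w).1 = [] ∧ avoidTo i v j w = true) ∨
      (isPath v i (splitLast i w).1 = true ∧ avoidTo i i j (splitLast i w).2 = true) := by
  induction w generalizing v with
  | nil =>
    left
    simp only [isPath, decide_eq_true_eq] at h
    simp [splitLast, avoidTo, h]
  | cons e rest ih =>
    simp only [isPath, Bool.and_eq_true, decide_eq_true_eq] at h
    by_cases hc : (decide (e.2 = i) || visits i rest) = true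
    · right
      rcases ih (v := e.2) h.2 with ⟨h1, h2⟩ | ⟨h1, h2⟩
      · -- no visit inside rest
        have hrest : (splitLast i rest).2 = rest := by
          have := splitLast_append i rest; rw [h1] at this; simpa using this
        have hnv : visits i rest = false := by
          rw [hrest] at *; exact avoid_not_visits h2
        have he : e.2 = i := by
          rcases Bool.or_eq_true_iff.mp hc with h' | h'
          · exact of_decide_eq_true h'
          · rw [hnv] at h'; exact absurd h' (by simp)
        simp only [splitLast, hc, if_true]
        constructor
        · simp [isPath, h1, h.1, he]
        · rw [hrest]; exact he ▸ h2
      · simp only [splitLast, hc, if_true]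
        refine ⟨?_, h2⟩
        simp [isPath, h.1, h1]
    · left
      simp only [Bool.or_eq_true, not_or] at hc
      have he : ¬ e.2 = i := by simpa using fun h' => hc.1 (decide_eq_true h')
      have hnv : visits i rest = false := by
        rcases Bool.eq_false_or_eq_true (visits i rest) with h' | h'
        · exact absurd h' hc.2
        · exact h'
      constructor
      · simp [splitLast, he, hnv]
      · simp only [avoidTo, Bool.and_eq_true, decide_eq_true_eq, Bool.not_eq_true',
          decide_eq_false_iff_not]
        exact ⟨⟨h.1, he⟩, path_avoid h.2 hnv⟩

lemma splitLast_eq {i j c : Fin n} {u z : List (Edge n)} (hu : isPath c i u = true)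
    (hz : avoidTo i i j z = true) : splitLast i (u ++ z) = (u, z) := by
  induction u generalizing c with
  | nil =>
    simp only [isPath, decide_eq_true_eq] at hu
    simpa using splitLast_of_not_visits (avoid_not_visits hz)
  | cons e rest ih =>
    simp only [isPath, Bool.and_eq_true, decide_eq_true_eq] at hu
    have hc : (decide (e.2 = i) || visits i (rest ++ z)) = true := by
      rcases rest with _ | ⟨f, rest'⟩
      · have : e.2 = i := by simpa [isPath] using hu.2
        simp [this]
      · have := visits_end hu.2 (by simp)
        simp only [visits, List.any_append, Bool.or_eq_true]
        right; left; simpa [visits] using this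
    rw [List.cons_append, splitLast]
    rw [if_pos hc, ih hu.2]

/-- split a word at its last visit to `i` strictly before the end -/
def splitLastB (i : Fin n) : List (Edge n) → List (Edge n) × List (Edge n)
  | [] => ([], [])
  | e :: rest =>
      if (!rest.isEmpty && decide (e.2 = i)) || visitsB i rest then
        (e :: (splitLastB i rest).1, (splitLastB i rest).2)
      else ([], e :: rest)

lemma splitLastB_append (i : Fin n) (w : List (Edge n)) :
    (splitLastB i w).1 ++ (splitLastB i w).2 = w := by
  induction w with
  | nil => rfl
  | cons e rest ih =>
    by_cases hc : ((!rest.isEmpty && decide (e.2 = i)) || visitsB i rest) = true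
    · simp [splitLastB, hc, ih]
    · rw [splitLastB, if_neg hc]
      simp

lemma splitLastB_of_not_visitsB {i : Fin n} {w : List (Edge n)} (h : visitsB i w = false) :
    splitLastB i w = ([], w) := by
  cases w with
  | nil => rfl
  | cons e rest =>
    rw [visitsB] at h
    rw [splitLastB, if_neg (by simp [h])]

lemma splitLastB_spec {i v : Fin n} {w : List (Edge n)} (h : isPath v i w = true)
    (hw : w ≠ []) :
    ((splitLastB i w).1 = [] ∧ firstRet i v w = true) ∨
      (isPath v i (splitLastB i w).1 = true ∧ firstRet i i (splitLastB i w).2 = true) := by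
  induction w generalizing v with
  | nil => exact absurd rfl hw
  | cons e rest ih =>
    simp only [isPath, Bool.and_eq_true, decide_eq_true_eq] at h
    by_cases hc : ((!rest.isEmpty && decide (e.2 = i)) || visitsB i rest) = true
    · right
      have hrne : rest ≠ [] := by
        rintro rfl; simp [visitsB] at hc
      rcases ih (v := e.2) h.2 hrne with ⟨h1, h2⟩ | ⟨h1, h2⟩
      · have hrest : (splitLastB i rest).2 = rest := by
          have := splitLastB_append i rest; rw [h1] at this; simpa using this
        have hnv : visitsB i rest = false := firstRet_not_visitsB h2
        have he : e.2 = i := by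
          rcases Bool.or_eq_true_iff.mp hc with h' | h'
          · exact of_decide_eq_true (Bool.and_eq_true_iff.mp h').2
          · rw [hnv] at h'; exact absurd h' (by simp)
        simp only [splitLastB, hc, if_true]
        constructor
        · simp [isPath, h1, h.1, he]
        · rw [hrest]; exact he ▸ h2
      · simp only [splitLastB, hc, if_true]
        refine ⟨?_, h2⟩
        simp [isPath, h.1, h1]
    · left
      have hnv : visitsB i (e :: rest) = false := by
        rw [visitsB]; exact Bool.not_eq_true _ ▸ (by simpa using hc)
      constructor
      · rw [splitLastB, if_neg hc]
      · exact path_not_visitsB_firstRet (by simp [isPath, h.1, h.2]) hw hnv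

lemma splitLastB_eq {i c : Fin n} {u z : List (Edge n)} (hu : isPath c i u = true)
    (hz : firstRet i i z = true) : splitLastB i (u ++ z) = (u, z) := by
  induction u generalizing c with
  | nil =>
    simpa using splitLastB_of_not_visitsB (firstRet_not_visitsB hz)
  | cons e rest ih =>
    simp only [isPath, Bool.and_eq_true, decide_eq_true_eq] at hu
    have hv : visitsB i (e :: (rest ++ z)) = true := by
      have := visitsB_append (by simp [isPath, hu.1, hu.2] : isPath e.1 i (e :: rest) = true)
        (by simp : (e :: rest) ≠ []) (firstRet_ne_nil hz)
      simpa using this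
    rw [visitsB] at hv
    rw [List.cons_append, splitLastB]
    rw [if_pos hv, ih hu.2]

end Splits2
section Ser
variable {n : ℕ}

/-- the finset of words of length `m` -/
def lenF (n m : ℕ) : Finset (List (Edge n)) :=
  (Finset.univ : Finset (List.Vector (Edge n) m)).map
    ⟨List.Vector.toList, List.Vector.toList_injective⟩

lemma mem_lenF {m : ℕ} {w : List (Edge n)} : w ∈ lenF n m ↔ w.length = m := by
  simp only [lenF, Finset.mem_map, Finset.mem_univ, true_and, Function.Embedding.coeFn_mk]
  constructor
  · rintro ⟨v, rfl⟩; exact v.2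
  · intro h; exact ⟨⟨w, h⟩, rfl⟩

lemma coeff_ser (p : List (Edge n) → Bool) (m : ℕ) :
    (PowerSeries.coeff m) (ser p) = ∑ w ∈ lenF n m, if p w then wordOf w else 0 := by
  rw [ser, PowerSeries.coeff_mk, lenF, Finset.sum_map]
  rfl

/-- the key lemma: an unambiguous concatenation induces a product of characteristic series -/
lemma ser_mul (p q r : List (Edge n) → Bool)
    (φ : List (Edge n) → List (Edge n) × List (Edge n))
    (hφ : ∀ w, (φ w).1 ++ (φ w).2 = w)
    (h1 : ∀ w, r w = true → p (φ w).1 = true ∧ q (φ w).2 = true)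
    (h2 : ∀ u v, p u = true → q v = true → r (u ++ v) = true)
    (h3 : ∀ u v, p u = true → q v = true → φ (u ++ v) = (u, v)) :
    ser p * ser q = ser r := by
  apply PowerSeries.ext; intro m
  rw [PowerSeries.coeff_mul, coeff_ser]
  have step : ∀ ab : ℕ × ℕ,
      (PowerSeries.coeff ab.1) (ser p) * (PowerSeries.coeff ab.2) (ser q) =
      ∑ uv ∈ lenF n ab.1 ×ˢ lenF n ab.2,
        if p uv.1 && q uv.2 then wordOf uv.1 * wordOf uv.2 else 0 := by
    intro ab
    rw [coeff_ser, coeff_ser, Finset.sum_mul_sum]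
    rw [Finset.sum_product]
    refine Finset.sum_congr rfl fun u _ => Finset.sum_congr rfl fun v _ => ?_
    by_cases hp : p u <;> by_cases hq : q v <;> simp [hp, hq]
  simp_rw [step]
  have hsig : ∑ x ∈ (Finset.HasAntidiagonal.antidiagonal m).sigma (fun ab => lenF n ab.1 ×ˢ lenF n ab.2),
      (if (p x.2.1 && q x.2.2) = true then wordOf x.2.1 * wordOf x.2.2 else 0) =
      ∑ x ∈ Finset.HasAntidiagonal.antidiagonal m, ∑ uv ∈ lenF n x.1 ×ˢ lenF n x.2,
        (if (p uv.1 && q uv.2) = true then wordOf uv.1 * wordOf uv.2 else 0) :=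
    Finset.sum_sigma _ _ _
  rw [← hsig]
  rw [← Finset.sum_filter, ← Finset.sum_filter]
  refine Finset.sum_nbij' (fun x => x.2.1 ++ x.2.2)
    (fun w => ⟨((φ w).1.length, (φ w).2.length), φ w⟩) ?_ ?_ ?_ ?_ ?_
  · rintro ⟨ab, u, v⟩ hx
    simp only [Finset.mem_filter, Finset.mem_sigma, Finset.mem_product, mem_lenF,
      Finset.HasAntidiagonal.mem_antidiagonal, Bool.and_eq_true] at hx ⊢
    obtain ⟨⟨hab, hu, hv⟩, hp, hq⟩ := hx
    exact ⟨by simp [hu, hv, hab], h2 _ _ hp hq⟩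
  · intro w hw
    simp only [Finset.mem_filter, mem_lenF] at hw
    obtain ⟨h1', h2'⟩ := h1 w hw.2
    have hlen : (φ w).1.length + (φ w).2.length = m := by
      rw [← List.length_append, hφ w, hw.1]
    refine Finset.mem_filter.mpr ⟨Finset.mem_sigma.mpr ⟨Finset.HasAntidiagonal.mem_antidiagonal.mpr hlen,
      Finset.mem_product.mpr ⟨mem_lenF.mpr rfl, mem_lenF.mpr rfl⟩⟩, ?_⟩
    simp [h1', h2']
  · rintro ⟨ab, u, v⟩ hx
    simp only [Finset.mem_filter, Finset.mem_sigma, Finset.mem_product, mem_lenF,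
      Finset.mem_antidiagonal, Bool.and_eq_true] at hx
    obtain ⟨⟨hab, hu, hv⟩, hp, hq⟩ := hx
    have hphi := h3 u v hp hq
    refine Sigma.ext ?_ ?_
    · simp [hphi, hu, hv]
    · simp [hphi]
  · intro w hw
    exact hφ w
  · rintro ⟨ab, u, v⟩ hx
    simp only [Finset.mem_filter, Bool.and_eq_true] at hx
    rw [wordOf_append]

lemma ser_false : ser (fun _ : List (Edge n) => false) = 0 := by
  apply PowerSeries.ext; intro m
  rw [coeff_ser]
  simp

lemma ser_isEmpty : ser (fun w : List (Edge n) => w.isEmpty) = 1 := by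
  apply PowerSeries.ext; intro m
  rw [coeff_ser]
  cases m with
  | zero =>
    have : lenF n 0 = {([] : List (Edge n))} := by
      ext w; simp [mem_lenF, List.length_eq_zero_iff]
    rw [this]
    simp [wordOf]
  | succ m =>
    have h0 : ∀ w ∈ lenF n (m + 1), (if (w.isEmpty = true) then wordOf w else 0) = 0 := by
      intro w hw
      rw [mem_lenF] at hw
      rcases w with _ | ⟨e, rest⟩
      · simp at hw
      · simp
    rw [Finset.sum_eq_zero h0, PowerSeries.coeff_one]
    simp

/-- subtracting series over a partition of a language -/
lemma ser_sub_sum {ι : Type*} (s : Finset ι) (p q : List (Edge n) → Bool)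
    (f : ι → List (Edge n) → Bool)
    (h : ∀ w, (if p w then (1 : ℤ) else 0) - ∑ k ∈ s, (if f k w then (1 : ℤ) else 0) =
      if q w then 1 else 0) :
    ser p - ∑ k ∈ s, ser (f k) = ser q := by
  apply PowerSeries.ext; intro m
  rw [map_sub, map_sum, coeff_ser, coeff_ser]
  simp_rw [coeff_ser]
  rw [Finset.sum_comm, ← Finset.sum_sub_distrib]
  refine Finset.sum_congr rfl fun w _ => ?_
  have e1 : ∀ b : Bool, (if b = true then wordOf w else 0) =
      (if b = true then (1 : ℤ) else 0) • wordOf w := by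
    intro b; split <;> simp
  rw [e1, e1]
  calc (if p w then (1:ℤ) else 0) • wordOf w - ∑ k ∈ s, (if f k w then wordOf w else 0)
      = ((if p w then (1:ℤ) else 0) - ∑ k ∈ s, (if f k w then (1:ℤ) else 0)) • wordOf w := by
        rw [sub_smul, Finset.sum_smul]
        congr 1
        refine Finset.sum_congr rfl fun k _ => e1 _
    _ = (if q w then (1:ℤ) else 0) • wordOf w := by rw [h w]

end Ser
section Inst
variable {n : ℕ}

lemma ser_CL (i : Fin n) :
    ser (firstRet i i) * ser (isPath i i) =
      ser (fun w => isPath i i w && !w.isEmpty) := by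
  refine ser_mul _ _ _ (splitFirst i) (splitFirst_append i) ?_ ?_ ?_
  · intro w hw
    simp only [Bool.and_eq_true, Bool.not_eq_true', List.isEmpty_eq_false_iff] at hw
    exact splitFirst_spec hw.1 hw.2
  · intro u v hu hv
    have h1 := isPath_append (firstRet_path hu) hv
    have h2 := firstRet_ne_nil hu
    simp only [Bool.and_eq_true, Bool.not_eq_true', List.isEmpty_eq_false_iff]
    exact ⟨h1, by simp [h2]⟩
  · intro u v hu _
    exact splitFirst_eq hu v

lemma ser_LC (i : Fin n) :
    ser (isPath i i) * ser (firstRet i i) =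
      ser (fun w => isPath i i w && !w.isEmpty) := by
  refine ser_mul _ _ _ (splitLastB i) (splitLastB_append i) ?_ ?_ ?_
  · intro w hw
    simp only [Bool.and_eq_true, Bool.not_eq_true', List.isEmpty_eq_false_iff] at hw
    rcases splitLastB_spec hw.1 hw.2 with ⟨h1, h2⟩ | ⟨h1, h2⟩
    · have hs2 : (splitLastB i w).2 = w := by
        have := splitLastB_append i w; rw [h1] at this; simpa using this
      exact ⟨by simp [h1, isPath], by rw [hs2]; exact h2⟩
    · exact ⟨h1, h2⟩
  · intro u v hu hv
    have h1 := isPath_append hu (firstRet_path hv)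
    have h2 := firstRet_ne_nil hv
    simp only [Bool.and_eq_true, Bool.not_eq_true', List.isEmpty_eq_false_iff]
    exact ⟨h1, by simp [h2]⟩
  · intro u v hu hv
    exact splitLastB_eq hu hv

lemma ser_LP (i j : Fin n) :
    ser (isPath i i) * ser (avoidTo i i j) = ser (isPath i j) := by
  refine ser_mul _ _ _ (splitLast i) (splitLast_append i) ?_ ?_ ?_
  · intro w hw
    rcases splitLast_spec (i := i) hw with ⟨h1, h2⟩ | ⟨h1, h2⟩
    · have hs2 : (splitLast i w).2 = w := by
        have := splitLast_append i w; rw [h1] at this; simpa using this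
      exact ⟨by simp [h1, isPath], by rw [hs2]; exact h2⟩
    · exact ⟨h1, h2⟩
  · intro u v hu hv
    exact isPath_append hu (avoid_path hv)
  · intro u v hu hv
    exact splitLast_eq hu hv

end Inst
section MatRec
variable {n : ℕ}

lemma genM_eq (i k : Fin n) :
    genM n i k = ser (fun w => decide (w = [(i, k)])) := by
  apply PowerSeries.ext; intro m
  rw [coeff_ser]
  have hg : genM n i k = PowerSeries.X * PowerSeries.C (FreeAlgebra.ι ℚ (i, k)) := rfl
  rw [hg]
  cases m with
  | zero =>
    rw [PowerSeries.coeff_zero_X_mul]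
    refine (Finset.sum_eq_zero fun w hw => ?_).symm
    rw [mem_lenF] at hw
    have : ¬ (w = [(i, k)]) := by rintro rfl; simp at hw
    simp [this]
  | succ m =>
    rw [PowerSeries.coeff_succ_X_mul, PowerSeries.coeff_C]
    cases m with
    | zero =>
      rw [Finset.sum_eq_single ([((i, k) : Edge n)])]
      · simp [wordOf]
      · intro w _ hne
        simp [hne]
      · intro hmem
        exact absurd (mem_lenF.mpr (by simp)) hmem
    | succ m' =>
      have hz : ∀ w ∈ lenF n (m' + 1 + 1),
          (if (decide (w = [(i, k)])) = true then wordOf w else 0) = 0 := by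
        intro w hw
        rw [mem_lenF] at hw
        have hne : ¬ (w = [(i, k)]) := by rintro rfl; simp at hw
        simp [hne]
      rw [Finset.sum_eq_zero hz]
      simp

/-- words starting with the letter `e` followed by a word in `p` -/
def consP (e : Edge n) (p : List (Edge n) → Bool) : List (Edge n) → Bool
  | [] => false
  | f :: rest => decide (f = e) && p rest

/-- words ending with the letter `e` preceded by a word in `p` -/
def snocP (e : Edge n) (p : List (Edge n) → Bool) (w : List (Edge n)) : Bool :=
  decide (w.getLast? = some e) && p w.dropLast

lemma ser_single_mul (e : Edge n) (p : List (Edge n) → Bool) :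
    ser (fun w => decide (w = [e])) * ser p = ser (consP e p) := by
  refine ser_mul _ _ _ (fun w => (w.take 1, w.drop 1))
    (fun w => List.take_append_drop 1 w) ?_ ?_ ?_
  · intro w hw
    rcases w with _ | ⟨f, rest⟩
    · simp [consP] at hw
    · simp only [consP, Bool.and_eq_true, decide_eq_true_eq] at hw
      constructor
      · simp [hw.1]
      · simpa using hw.2
  · intro u v hu hv
    have : u = [e] := by simpa using hu
    subst this
    simp [consP, hv]
  · intro u v hu hv
    have : u = [e] := by simpa using hu
    subst this
    simp

lemma ser_mul_single (e : Edge n) (p : List (Edge n) → Bool) :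
    ser p * ser (fun w => decide (w = [e])) = ser (snocP e p) := by
  refine ser_mul _ _ _ (fun w => (w.dropLast, w.getLast?.elim [] (fun f => [f])))
    ?_ ?_ ?_ ?_
  · intro w
    rcases List.eq_nil_or_concat w with rfl | ⟨u, f, rfl⟩
    · simp
    · simp [List.getLast?_concat, List.dropLast_concat]
  · intro w hw
    simp only [snocP, Bool.and_eq_true, decide_eq_true_eq] at hw
    refine ⟨hw.2, ?_⟩
    exact decide_eq_true (show (w.getLast?.elim [] fun f => [f]) = [e] by rw [hw.1]; rfl)
  · intro u v hu hv
    have : v = [e] := by simpa using hv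
    subst this
    simp only [snocP]
    rw [List.getLast?_concat, List.dropLast_concat]
    simp [hu]
  · intro u v hu hv
    have : v = [e] := by simpa using hv
    subst this
    simp [List.getLast?_concat, List.dropLast_concat]

lemma isPath_concat {a c : Fin n} {u : List (Edge n)} {e : Edge n} :
    isPath a c (u ++ [e]) = (isPath a e.1 u && decide (e.2 = c)) := by
  induction u generalizing a with
  | nil => simp [isPath]
  | cons f rest ih => simp [isPath, ih, Bool.and_assoc]

lemma ser_delta (i j : Fin n) :
    ser (fun w : List (Edge n) => decide (i = j) && w.isEmpty) =
      if i = j then 1 else 0 := by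
  by_cases h : i = j
  · rw [if_pos h]
    have he : (fun w : List (Edge n) => decide (i = j) && w.isEmpty) =
        fun w => w.isEmpty := by
      funext w; simp [h]
    rw [he, ser_isEmpty]
  · rw [if_neg h]
    have he : (fun w : List (Edge n) => decide (i = j) && w.isEmpty) =
        fun _ => false := by
      funext w; simp [h]
    rw [he, ser_false]

lemma ser_left_rec (i j : Fin n) :
    ser (isPath i j) - ∑ k : Fin n, ser (consP (i, k) (isPath k j)) =
      ser (fun w => decide (i = j) && w.isEmpty) := by
  refine ser_sub_sum Finset.univ _ _ _ ?_
  intro w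
  rcases w with _ | ⟨f, rest⟩
  · have : ∀ k : Fin n, (if consP (i, k) (isPath k j) [] = true then (1:ℤ) else 0) = 0 := by
      intro k; simp [consP]
    rw [Finset.sum_eq_zero fun k _ => this k]
    by_cases h : i = j <;> simp [isPath, h]
  · rw [Finset.sum_eq_single f.2]
    · have hd : decide (f = ((i, f.2) : Edge n)) = decide (i = f.1) := by
        rcases f with ⟨f1, f2⟩
        exact decide_eq_decide.mpr (by simp [Prod.ext_iff, eq_comm])
      simp only [consP, isPath, hd]
      simp
    · intro k _ hk
      have hd : decide (f = ((i, k) : Edge n)) = false := by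
        rw [decide_eq_false_iff_not]; rintro rfl; exact hk rfl
      simp [consP, hd]
    · intro h; exact absurd (Finset.mem_univ _) h

lemma ser_right_rec (i j : Fin n) :
    ser (isPath i j) - ∑ k : Fin n, ser (snocP (k, j) (isPath i k)) =
      ser (fun w => decide (i = j) && w.isEmpty) := by
  refine ser_sub_sum Finset.univ _ _ _ ?_
  intro w
  rcases List.eq_nil_or_concat w with rfl | ⟨u, e, hw⟩
  · have h0 : ∀ k : Fin n, (if snocP (k, j) (isPath i k) [] = true then (1:ℤ) else 0) = 0 := by
      intro k; simp [snocP]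
    rw [Finset.sum_eq_zero fun k _ => h0 k]
    by_cases h : i = j <;> simp [isPath, h]
  · rw [List.concat_eq_append] at hw
    subst hw
    rw [Finset.sum_eq_single e.1]
    · have hd : decide ((some e : Option (Edge n)) = some (e.1, j)) = decide (e.2 = j) := by
        rcases e with ⟨e1, e2⟩
        exact decide_eq_decide.mpr (by simp [Prod.ext_iff, eq_comm])
      simp only [snocP, List.getLast?_concat, List.dropLast_concat, isPath_concat, hd]
      have hcomm : (decide (e.2 = j) && isPath i e.1 u) = (isPath i e.1 u && decide (e.2 = j)) :=
        Bool.and_comm _ _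
      rw [hcomm]
      simp
    · intro k _ hk
      have hd : decide ((e : Edge n) = (k, j)) = false := by
        rw [decide_eq_false_iff_not]
        intro h'
        exact hk (by simp [h'])
      simp [snocP, List.getLast?_concat, hd]
    · intro h; exact absurd (Finset.mem_univ _) h

end MatRec
section Main
variable {n : ℕ}

/-- the matrix of all-paths series -/
noncomputable def NM (n : ℕ) :
    Matrix (Fin n) (Fin n) (PowerSeries (FreeAlgebra ℚ (Edge n))) :=
  Matrix.of fun i j => ser (isPath i j)

lemma ser_loop (i : Fin n) :
    ser (isPath i i) - ser (fun w => isPath i i w && !w.isEmpty) = 1 := by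
  have hsum : ∑ _k : Unit, ser (fun w => isPath i i w && !w.isEmpty) =
      ser (fun w => isPath i i w && !w.isEmpty) := by simp
  have h := ser_sub_sum (Finset.univ : Finset Unit) (isPath i i)
      (fun w => decide (i = i) && w.isEmpty)
      (fun _ => fun w => isPath i i w && !w.isEmpty) ?_
  · rw [hsum] at h
    rw [h, ser_delta i i, if_pos rfl]
  · intro w
    have hs : ∑ _k : Unit, (if (isPath i i w && !w.isEmpty) = true then (1:ℤ) else 0) =
        (if (isPath i i w && !w.isEmpty) = true then (1:ℤ) else 0) := by simp
    rw [hs]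
    rcases w with _ | ⟨e, rest⟩
    · simp [isPath]
    · by_cases hp : isPath i i (e :: rest) = true <;> simp [hp]

lemma unit_left (i : Fin n) :
    (1 - ser (firstRet i i)) * ser (isPath i i) = 1 := by
  rw [sub_mul, one_mul, ser_CL i]
  exact ser_loop i

lemma unit_right (i : Fin n) :
    ser (isPath i i) * (1 - ser (firstRet i i)) = 1 := by
  rw [mul_sub, mul_one, ser_LC i]
  exact ser_loop i

lemma inv_C (i : Fin n) :
    Ring.inverse (1 - ser (firstRet i i)) = ser (isPath i i) := by
  exact Ring.inverse_unit
    ⟨1 - ser (firstRet i i), ser (isPath i i), unit_left i, unit_right i⟩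

lemma matrix_left (n : ℕ) : (1 - genM n) * NM n = 1 := by
  ext i j
  rw [Matrix.mul_apply]
  have step : ∀ k, (1 - genM n) i k * NM n k j =
      (if i = k then ser (isPath k j) else 0) - ser (consP (i, k) (isPath k j)) := by
    intro k
    rw [Matrix.sub_apply, Matrix.one_apply, sub_mul]
    congr 1
    · split <;> simp [NM]
    · rw [genM_eq i k]
      simp only [NM, Matrix.of_apply]
      rw [ser_single_mul]
  rw [Finset.sum_congr rfl fun k _ => step k, Finset.sum_sub_distrib,
    Finset.sum_ite_eq Finset.univ i (fun k => ser (isPath k j))]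
  simp only [Finset.mem_univ, if_true]
  rw [ser_left_rec i j, ser_delta i j, Matrix.one_apply]

lemma matrix_right (n : ℕ) : NM n * (1 - genM n) = 1 := by
  ext i j
  rw [Matrix.mul_apply]
  have step : ∀ k, NM n i k * (1 - genM n) k j =
      (if k = j then ser (isPath i k) else 0) - ser (snocP (k, j) (isPath i k)) := by
    intro k
    rw [Matrix.sub_apply, Matrix.one_apply, mul_sub]
    congr 1
    · split <;> simp [NM]
    · rw [genM_eq k j]
      simp only [NM, Matrix.of_apply]
      rw [ser_mul_single]
  rw [Finset.sum_congr rfl fun k _ => step k, Finset.sum_sub_distrib,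
    Finset.sum_ite_eq' Finset.univ j (fun k => ser (isPath i k))]
  simp only [Finset.mem_univ, if_true]
  rw [ser_right_rec i j, ser_delta i j, Matrix.one_apply]

end Main
/-- In `ℚ⟨⟨a_ij⟩⟩`, the matrix identity
`(1 − M)⁻¹ = D(C₁*, …, C_n*) · (P_ij)` holds, where `M` is the generic matrix,
`C_i` the first-return series at `i`, `C* = (1 − C)⁻¹`, and `P_ij` the series of paths
from `i` to `j` not returning to `i` — equivalently, the `(i,j)` entry of `(1 − M)⁻¹`
equals `(1 − C_i)⁻¹ · P_ij`. -/
theorem stmt9 (n : ℕ) :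
    Ring.inverse (1 - genM n) =
      Matrix.diagonal (fun i => Ring.inverse (1 - ser (firstRet i i))) *
        Matrix.of (fun i j => ser (avoidTo i i j)) := by
  have hinv : Ring.inverse (1 - genM n) = NM n :=
    Ring.inverse_unit ⟨1 - genM n, NM n, matrix_left n, matrix_right n⟩
  rw [hinv]
  refine Matrix.ext fun i j => ?_
  rw [Matrix.diagonal_mul, inv_C i]
  show ser (isPath i j) = ser (isPath i i) * ser (avoidTo i i j)
  exact (ser_LP i j).symm
end

section
/- Let π : A → ℝ assign positive weights summing to 1 to the letters of a finite alphabet A, extended multiplicatively to a monoid morphism A* → ℝ₊. If L ⊆ A* is a language that does not intersect some nonempty two-sided ideal of A* (i.e., there exists a word u such that no word of L contains u as a factor), then the sum of π(w) over w ∈ L is finite. -/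
open Finset

namespace Stmt14

variable {A : Type*} [Fintype A]

theorem consEmb_inj (A : Type*) : Function.Injective (fun p : A × List A => p.1 :: p.2) := by
  intro p q h; cases p; cases q; simpa [Prod.ext_iff] using h

def consEmb (A : Type*) : A × List A ↪ List A :=
  ⟨fun p => p.1 :: p.2, consEmb_inj A⟩

/-- The finset of words of length `n`. -/
def wordsLen (A : Type*) [Fintype A] : ℕ → Finset (List A)
  | 0 => {([] : List A)}
  | n + 1 => (Finset.univ ×ˢ wordsLen A n).map (consEmb A)

lemma mem_wordsLen : ∀ (n : ℕ) (w : List A), w ∈ wordsLen A n ↔ w.length = n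
  | 0, w => by simp [wordsLen, List.length_eq_zero_iff]
  | n + 1, [] => by simp [wordsLen, consEmb]
  | n + 1, a :: t => by
    simp [wordsLen, consEmb, mem_wordsLen n t, eq_comm]

lemma sum_wordsLen_pi (π : A → ℝ) (hsum : ∑ a, π a = 1) :
    ∀ n, ∑ w ∈ wordsLen A n, (w.map π).prod = 1
  | 0 => by simp [wordsLen]
  | n + 1 => by
    rw [wordsLen, Finset.sum_map]
    simp only [consEmb, Function.Embedding.coeFn_mk, List.map_cons, List.prod_cons]
    rw [Finset.sum_product]
    simp_rw [← Finset.mul_sum, sum_wordsLen_pi π hsum n, mul_one]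
    exact hsum

lemma sum_wordsLen_append (k n : ℕ) (f : List A → ℝ) :
    ∑ w ∈ wordsLen A (k + n), f w
      = ∑ v ∈ wordsLen A k, ∑ x ∈ wordsLen A n, f (v ++ x) := by
  rw [← Finset.sum_product']
  refine Finset.sum_nbij' (fun w => (w.take k, w.drop k)) (fun p => p.1 ++ p.2)
    ?_ ?_ ?_ ?_ ?_
  · intro w hw
    rw [mem_wordsLen] at hw
    simp [Finset.mem_product, mem_wordsLen, hw, Nat.min_eq_left (Nat.le_add_right k n)]
  · intro p hp
    rw [Finset.mem_product, mem_wordsLen, mem_wordsLen] at hp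
    simp [mem_wordsLen, hp.1, hp.2]
  · intro w _
    exact List.take_append_drop k w
  · intro p hp
    rw [Finset.mem_product, mem_wordsLen, mem_wordsLen] at hp
    obtain ⟨h1, h2⟩ := hp
    ext <;> simp [List.take_append, List.drop_append, h1]
  · intro w hw
    rw [List.take_append_drop]

end Stmt14

open Stmt14 in
/-- Let `π` be a Bernoulli morphism on a finite alphabet (positive weights
summing to 1, extended multiplicatively to words). If a language `L` avoids the two-sided
ideal `A* u A*` (no word of `L` has `u` as a factor), then `∑_{w ∈ L} π(w)` is finite. -/
theorem stmt14 {A : Type*} [Fintype A] (π : A → ℝ)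
    (hpos : ∀ a, 0 < π a) (hsum : ∑ a, π a = 1)
    (L : Set (List A)) (u : List A)
    (hL : ∀ w ∈ L, ¬ u <:+: w) :
    Summable (fun w : L => ((w : List A).map π).prod) := by
  classical
  rcases eq_or_ne u [] with rfl | hu
  · -- the empty word is a factor of everything, so `L` is empty
    haveI : IsEmpty L := ⟨fun w => hL w.1 w.2 List.nil_infix⟩
    exact Summable.of_finite
  -- notation
  set k := u.length with hk
  have hk0 : 0 < k := List.length_pos_iff.mpr hu
  set p : ℝ := (u.map π).prod with hp
  have hp0 : 0 < p := by
    apply List.prod_pos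
    intro x hx
    rcases List.mem_map.mp hx with ⟨a, _, rfl⟩
    exact hpos a
  have hu_mem : u ∈ wordsLen A k := (mem_wordsLen k u).mpr rfl
  have hpi_nonneg : ∀ w : List A, 0 ≤ (w.map π).prod := by
    intro w
    apply List.prod_nonneg
    intro x hx
    rcases List.mem_map.mp hx with ⟨a, _, rfl⟩
    exact (hpos a).le
  have hp1 : p ≤ 1 := by
    calc p ≤ ∑ w ∈ wordsLen A k, (w.map π).prod :=
          Finset.single_le_sum (fun w _ => hpi_nonneg w) hu_mem
      _ = 1 := sum_wordsLen_pi π hsum k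
  set q : ℝ := 1 - p with hq
  have hq0 : 0 ≤ q := by linarith
  have hq1 : q < 1 := by linarith
  -- the majorant function
  set g : List A → ℝ := fun w => if u <:+: w then 0 else (w.map π).prod with hg
  have hg_nonneg : ∀ w, 0 ≤ g w := by
    intro w
    by_cases h : u <:+: w <;> simp [hg, h, hpi_nonneg w]
  have hg_le : ∀ w, g w ≤ (w.map π).prod := by
    intro w
    by_cases h : u <:+: w <;> simp [hg, h, hpi_nonneg w]
  set T : ℕ → ℝ := fun n => ∑ w ∈ wordsLen A n, g w with hT
  have hT_nonneg : ∀ n, 0 ≤ T n := fun n =>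
    Finset.sum_nonneg fun w _ => hg_nonneg w
  have hT_le_one : ∀ n, T n ≤ 1 := by
    intro n
    calc T n ≤ ∑ w ∈ wordsLen A n, (w.map π).prod :=
          Finset.sum_le_sum fun w _ => hg_le w
      _ = 1 := sum_wordsLen_pi π hsum n
  -- the key step: T (k + n) ≤ q * T n
  have hkey : ∀ n, T (k + n) ≤ q * T n := by
    intro n
    have hpt : ∀ v ∈ wordsLen A k, ∀ x,
        g (v ++ x) ≤ (if v = u then 0 else (v.map π).prod) * g x := by
      intro v hv x
      by_cases h : u <:+: (v ++ x)
      · simp only [hg]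
        rw [if_pos h]
        apply mul_nonneg
        · split <;> [exact le_refl 0; exact hpi_nonneg v]
        · exact hg_nonneg x
      · have hvu : v ≠ u := by
          rintro rfl
          exact h ((List.prefix_append v x).isInfix)
        have hx : ¬ u <:+: x := fun hux => h (hux.trans (List.suffix_append v x).isInfix)
        simp only [hg]
        rw [if_neg h, if_neg hvu, if_neg hx, List.map_append, List.prod_append]
    calc T (k + n) = ∑ v ∈ wordsLen A k, ∑ x ∈ wordsLen A n, g (v ++ x) :=
          sum_wordsLen_append k n g
      _ ≤ ∑ v ∈ wordsLen A k, ∑ x ∈ wordsLen A n,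
            (if v = u then 0 else (v.map π).prod) * g x := by
          refine Finset.sum_le_sum fun v hv => Finset.sum_le_sum fun x _ => hpt v hv x
      _ = (∑ v ∈ wordsLen A k, if v = u then 0 else (v.map π).prod) * T n := by
          rw [Finset.sum_mul]
          refine Finset.sum_congr rfl fun v _ => ?_
          rw [Finset.mul_sum]
      _ = q * T n := by
          congr 1
          have := Finset.add_sum_erase (wordsLen A k)
            (fun w => (w.map π).prod) hu_mem
          have hsplit : ∑ v ∈ wordsLen A k, (if v = u then 0 else (v.map π).prod)
              = ∑ v ∈ (wordsLen A k).erase u, (v.map π).prod := by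
            rw [← Finset.add_sum_erase _ _ hu_mem, if_pos rfl, zero_add]
            refine Finset.sum_congr rfl fun v hv => ?_
            rw [if_neg (Finset.ne_of_mem_erase hv)]
          rw [hsplit, hq]
          have h1 : p + ∑ v ∈ (wordsLen A k).erase u, (v.map π).prod = 1 := by
            rw [hp, this, sum_wordsLen_pi π hsum k]
          linarith
  -- iterate: T (m * k + r) ≤ q ^ m * T r
  have hiter : ∀ m r, T (m * k + r) ≤ q ^ m * T r := by
    intro m
    induction m with
    | zero => intro r; simp
    | succ m ih =>
      intro r
      have : (m + 1) * k + r = k + (m * k + r) := by ring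
      rw [this]
      calc T (k + (m * k + r)) ≤ q * T (m * k + r) := hkey _
        _ ≤ q * (q ^ m * T r) := by
            exact mul_le_mul_of_nonneg_left (ih r) hq0
        _ = q ^ (m + 1) * T r := by ring
  have hTn : ∀ n, T n ≤ q ^ (n / k) := by
    intro n
    have hdm : n / k * k + n % k = n := Nat.div_add_mod' n k
    calc T n = T (n / k * k + n % k) := by rw [hdm]
      _ ≤ q ^ (n / k) * T (n % k) := hiter _ _
      _ ≤ q ^ (n / k) * 1 :=
          mul_le_mul_of_nonneg_left (hT_le_one _) (pow_nonneg hq0 _)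
      _ = q ^ (n / k) := mul_one _
  -- partial sums of q^(n/k) are bounded by k * p⁻¹
  have hgeom : ∀ N : ℕ, ∑ m ∈ Finset.range N, q ^ m ≤ p⁻¹ := by
    intro N
    have hs := summable_geometric_of_lt_one hq0 hq1
    calc ∑ m ∈ Finset.range N, q ^ m ≤ ∑' m : ℕ, q ^ m :=
          Summable.sum_le_tsum _ (fun m _ => pow_nonneg hq0 m) hs
      _ = (1 - q)⁻¹ := tsum_geometric_of_lt_one hq0 hq1
      _ = p⁻¹ := by rw [hq]; ring_nf
  have hrange : ∀ N : ℕ, ∑ n ∈ Finset.range N, q ^ (n / k) ≤ k * p⁻¹ := by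
    intro N
    have hinj : Set.InjOn (fun n : ℕ => (n / k, n % k)) (Finset.range N : Set ℕ) := by
      intro a _ b _ hab
      simp only [Prod.mk.injEq] at hab
      rw [← Nat.div_add_mod a k, ← Nat.div_add_mod b k, hab.1, hab.2]
    calc ∑ n ∈ Finset.range N, q ^ (n / k)
        = ∑ pr ∈ (Finset.range N).image (fun n : ℕ => (n / k, n % k)), q ^ pr.1 := by
          rw [Finset.sum_image (fun a ha b hb h => hinj ha hb h)]
      _ ≤ ∑ pr ∈ Finset.range N ×ˢ Finset.range k, q ^ pr.1 := by
          apply Finset.sum_le_sum_of_subset_of_nonneg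
          · intro pr hpr
            rcases Finset.mem_image.mp hpr with ⟨n, hn, rfl⟩
            rw [Finset.mem_range] at hn
            refine Finset.mem_product.mpr ⟨Finset.mem_range.mpr ?_, Finset.mem_range.mpr ?_⟩
            · exact lt_of_le_of_lt (Nat.div_le_self n k) hn
            · exact Nat.mod_lt n hk0
          · intro pr _ _
            exact pow_nonneg hq0 _
      _ = ∑ m ∈ Finset.range N, ∑ _r ∈ Finset.range k, q ^ m := by
          rw [Finset.sum_product]
      _ = (k : ℝ) * ∑ m ∈ Finset.range N, q ^ m := by
          simp [Finset.sum_const, mul_comm, Finset.mul_sum]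
      _ ≤ k * p⁻¹ := by
          apply mul_le_mul_of_nonneg_left (hgeom N)
          exact_mod_cast Nat.zero_le k
  -- summability of g
  have hgsum : Summable g := by
    apply summable_of_sum_le (c := (k : ℝ) * p⁻¹) hg_nonneg
    intro s
    set N : ℕ := s.sup List.length + 1 with hN
    have hsub : s ⊆ (Finset.range N).biUnion (wordsLen A) := by
      intro w hw
      apply Finset.mem_biUnion.mpr
      exact ⟨w.length, Finset.mem_range.mpr (Nat.lt_succ_of_le (Finset.le_sup hw)),
        (mem_wordsLen _ w).mpr rfl⟩
    have hdisj : ∀ a ∈ Finset.range N, ∀ b ∈ Finset.range N, a ≠ b →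
        Disjoint (wordsLen A a) (wordsLen A b) := by
      intro a _ b _ hab
      apply Finset.disjoint_left.mpr
      intro w hwa hwb
      rw [mem_wordsLen] at hwa hwb
      exact hab (hwa ▸ hwb)
    calc ∑ w ∈ s, g w ≤ ∑ w ∈ (Finset.range N).biUnion (wordsLen A), g w :=
          Finset.sum_le_sum_of_subset_of_nonneg hsub (fun w _ _ => hg_nonneg w)
      _ = ∑ n ∈ Finset.range N, T n := Finset.sum_biUnion hdisj
      _ ≤ ∑ n ∈ Finset.range N, q ^ (n / k) :=
          Finset.sum_le_sum fun n _ => hTn n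
      _ ≤ k * p⁻¹ := hrange N
  -- restrict to L
  have := hgsum.subtype L
  refine this.congr fun w => ?_
  simp only [Function.comp_apply, hg]
  rw [if_neg (hL w.1 w.2)]
end

section
/- Let R be an associative unital ring and A = (a_ij) an n×n matrix over R annihilating the column vector of all ones (all row sums are 0). For p ≠ q, if the quasideterminant |A^{pp}|_{qq} is defined (i.e., the relevant submatrix of A^{pp} with row q and column q deleted is invertible), then |A^{pq}|_{qp} is defined and |A^{pq}|_{qp} = −|A^{pp}|_{qq}. -/
/-- Let `A` be an `n×n` matrix over a unital ring all of whose row sums vanish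
(`A` annihilates the all-ones column), and let `p ≠ q`.  Suppose the quasideterminant
`|A^{pp}|_{qq}` is defined, i.e. the submatrix of `A` obtained by deleting rows and columns
`p` and `q` is invertible (with two-sided inverse `V`).  Then `|A^{pq}|_{qp}` is defined and
`|A^{pq}|_{qp} = −|A^{pp}|_{qq}`.  Here, with `r_i`/`c_j` denoting the corresponding deleted
row/column, `|B|_{ij} = b_{ij} − r_i (B^{ij})⁻¹ c_j`, so
`|A^{pp}|_{qq} = A q q − ∑_{l,k ∉ {p,q}} A q l · V l k · A k q` and
`|A^{pq}|_{qp} = A q p − ∑_{l,k ∉ {p,q}} A q l · V l k · A k p`. -/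
theorem stmt16 {R : Type*} [Ring R] {n : ℕ} (A : Matrix (Fin n) (Fin n) R)
    (hrow : ∀ i, ∑ j, A i j = 0) (p q : Fin n) (hpq : p ≠ q)
    (V : Matrix {k : Fin n // k ≠ p ∧ k ≠ q} {k : Fin n // k ≠ p ∧ k ≠ q} R)
    (hV1 : (A.submatrix (fun k : {k : Fin n // k ≠ p ∧ k ≠ q} => k.1)
        (fun k : {k : Fin n // k ≠ p ∧ k ≠ q} => k.1)) * V = 1)
    (hV2 : V * (A.submatrix (fun k : {k : Fin n // k ≠ p ∧ k ≠ q} => k.1)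
        (fun k : {k : Fin n // k ≠ p ∧ k ≠ q} => k.1)) = 1) :
    A q p - ∑ l : {k : Fin n // k ≠ p ∧ k ≠ q}, ∑ k : {k : Fin n // k ≠ p ∧ k ≠ q},
        A q l.1 * V l k * A k.1 p =
      -(A q q - ∑ l : {k : Fin n // k ≠ p ∧ k ≠ q}, ∑ k : {k : Fin n // k ≠ p ∧ k ≠ q},
        A q l.1 * V l k * A k.1 q) := by
  classical
  -- splitting a sum over Fin n
  have hsplit : ∀ f : Fin n → R, ∑ j, f j = f p + f q + ∑ k : {k : Fin n // k ≠ p ∧ k ≠ q}, f k.1 := by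
    intro f
    have h1 : ∑ k : {k : Fin n // k ≠ p ∧ k ≠ q}, f k.1
        = ∑ j ∈ (Finset.univ \ {p, q}), f j := by
      rw [Finset.sum_subtype (p := fun x => x ≠ p ∧ x ≠ q) (Finset.univ \ {p, q})
        (fun x => by simp) f]
    have h2 : ∑ j ∈ ({p, q} : Finset (Fin n)), f j = f p + f q :=
      Finset.sum_pair hpq
    have h3 := Finset.sum_sdiff (f := f) (Finset.subset_univ ({p, q} : Finset (Fin n)))
    rw [h1, h2.symm]
    rw [← h3, add_comm]
  have hrow' : ∀ i, ∑ k : {k : Fin n // k ≠ p ∧ k ≠ q}, A i k.1 = -(A i p + A i q) := by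
    intro i
    have := hrow i
    rw [hsplit (A i)] at this
    exact eq_neg_of_add_eq_zero_right this
  have hVA : ∀ l m : {k : Fin n // k ≠ p ∧ k ≠ q}, ∑ k : {k : Fin n // k ≠ p ∧ k ≠ q}, V l k * A k.1 m.1 = if l = m then 1 else 0 := by
    intro l m
    have := congrFun (congrFun hV2 l) m
    simpa [Matrix.mul_apply, Matrix.one_apply] using this
  set S1 := ∑ l : {k : Fin n // k ≠ p ∧ k ≠ q}, ∑ k : {k : Fin n // k ≠ p ∧ k ≠ q}, A q l.1 * V l k * A k.1 p with hS1
  set S2 := ∑ l : {k : Fin n // k ≠ p ∧ k ≠ q}, ∑ k : {k : Fin n // k ≠ p ∧ k ≠ q}, A q l.1 * V l k * A k.1 q with hS2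
  have hkey : S1 + S2 = A q p + A q q := by
    have : S1 + S2 = ∑ l : {k : Fin n // k ≠ p ∧ k ≠ q}, ∑ k : {k : Fin n // k ≠ p ∧ k ≠ q}, A q l.1 * V l k * (A k.1 p + A k.1 q) := by
      rw [hS1, hS2, ← Finset.sum_add_distrib]
      refine Finset.sum_congr rfl fun l _ => ?_
      rw [← Finset.sum_add_distrib]
      refine Finset.sum_congr rfl fun k _ => ?_
      rw [mul_add]
    have h4 : ∀ k : {k : Fin n // k ≠ p ∧ k ≠ q}, A k.1 p + A k.1 q
        = -∑ m : {k : Fin n // k ≠ p ∧ k ≠ q}, A k.1 m.1 := by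
      intro k; rw [hrow' k.1, neg_neg]
    rw [this]
    have hinner : ∀ l : {k : Fin n // k ≠ p ∧ k ≠ q},
        ∑ k : {k : Fin n // k ≠ p ∧ k ≠ q}, A q l.1 * V l k * (A k.1 p + A k.1 q)
        = -A q l.1 := by
      intro l
      calc ∑ k : {k : Fin n // k ≠ p ∧ k ≠ q}, A q l.1 * V l k * (A k.1 p + A k.1 q)
          = ∑ k : {k : Fin n // k ≠ p ∧ k ≠ q},
            -∑ m : {k : Fin n // k ≠ p ∧ k ≠ q}, A q l.1 * (V l k * A k.1 m.1) := by
            refine Finset.sum_congr rfl fun k _ => ?_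
            rw [h4 k, mul_neg, Finset.mul_sum]
            congr 1
            refine Finset.sum_congr rfl fun m _ => ?_
            rw [mul_assoc]
        _ = -∑ m : {k : Fin n // k ≠ p ∧ k ≠ q},
              A q l.1 * ∑ k : {k : Fin n // k ≠ p ∧ k ≠ q}, V l k * A k.1 m.1 := by
            simp only [Finset.sum_neg_distrib, Finset.mul_sum]
            rw [Finset.sum_comm]
        _ = -∑ m : {k : Fin n // k ≠ p ∧ k ≠ q},
              A q l.1 * (if l = m then (1:R) else 0) := by
            congr 1
            refine Finset.sum_congr rfl fun m _ => ?_
            rw [hVA l m]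
        _ = -A q l.1 := by
            simp [mul_ite, Finset.sum_ite_eq]
    rw [Finset.sum_congr rfl fun l _ => hinner l, Finset.sum_neg_distrib, hrow' q, neg_neg,
      add_comm]
  calc A q p - S1 = (A q p + A q q - (S1 + S2)) - (A q q - S2) := by abel
    _ = -(A q q - S2) := by rw [hkey, sub_self, zero_sub]
end

section
/- Let D be a division ring, t a central variable, and M ∈ D^{n×n}. If M does not have eigenvalue 1 (no nonzero column vector c over D with Mc = c), then the matrix (1 − tM)^{-1} over D(t) is evaluable at t = 1, and its value equals (1 − M)^{-1}. -/
open MulOpposite Matrix Finset PowerSeries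

theorem aux_isUnit {k : ℕ} {D : Type*} [DivisionRing D] (A : Matrix (Fin k) (Fin k) D)
    (h : ∀ c : Fin k → D, A.mulVec c = 0 → c = 0) :
    ∃ N : Matrix (Fin k) (Fin k) D, A * N = 1 ∧ N * A = 1 := by
  set B : Matrix (Fin k) (Fin k) Dᵐᵒᵖ := Matrix.map (Matrix.transpose A) (op : D → Dᵐᵒᵖ) with hB
  have hVec : ∀ x : Fin k → Dᵐᵒᵖ, x ᵥ* B = op ∘ (A.mulVec (fun l => unop (x l))) := by
    intro x
    funext i
    simp only [Matrix.vecMul, dotProduct, hB, Matrix.map_apply, Matrix.transpose_apply,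
      Function.comp_apply, Matrix.mulVec, Finset.op_sum, op_mul, op_unop]
  have hinj : Function.Injective B.vecMulLinear := by
    rw [← LinearMap.ker_eq_bot, LinearMap.ker_eq_bot']
    intro x hx
    have hx' : x ᵥ* B = 0 := hx
    rw [hVec] at hx'
    have : A.mulVec (fun l => unop (x l)) = 0 := by
      funext i
      have := congrFun hx' i
      simpa using congrArg unop this
    have := h _ this
    funext l
    have := congrFun this l
    simpa using congrArg op this
  have hsurj : Function.Surjective B.vecMulLinear :=
    LinearMap.surjective_of_injective hinj
  have hsurj' : Function.Surjective B.vecMul := hsurj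
  obtain ⟨C, hC⟩ := Matrix.vecMul_surjective_iff_exists_left_inverse.mp hsurj'
  -- show B * C = 1 as well
  have hBC : B * C = 1 := by
    have key : (B * C - 1) * B = 0 := by
      rw [Matrix.sub_mul, Matrix.mul_assoc, hC, Matrix.one_mul, Matrix.mul_one, sub_self]
    have : B * C - 1 = 0 := by
      apply Matrix.ext
      intro i j
      have hrow : (B * C - 1) i ᵥ* B = 0 := by
        have := congrFun (congrFun key i)
        funext j'
        have h2 := this j'
        simpa [Matrix.mul_apply, Matrix.vecMul, dotProduct] using h2
      have := hinj (a₁ := (B * C - 1) i) (a₂ := 0) (by simpa [Matrix.vecMul_zero] using hrow)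
      simpa using congrFun this j
    have := sub_eq_zero.mp this
    exact this
  refine ⟨Matrix.map (Matrix.transpose C) (unop : Dᵐᵒᵖ → D), ?_, ?_⟩
  · apply Matrix.ext
    intro i j
    apply op_injective
    have h1 : op ((A * Matrix.map (Matrix.transpose C) (unop : Dᵐᵒᵖ → D)) i j)
        = (C * B) j i := by
      simp [Matrix.mul_apply, Finset.op_sum, op_mul, hB]
    rw [h1, hC]
    simp [Matrix.one_apply, eq_comm]
    split <;> simp_all
  · apply Matrix.ext
    intro i j
    apply op_injective
    have h1 : op ((Matrix.map (Matrix.transpose C) (unop : Dᵐᵒᵖ → D) * A) i j)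
        = (B * C) j i := by
      simp [Matrix.mul_apply, Finset.op_sum, op_mul, hB]
    rw [h1, hBC]
    simp [Matrix.one_apply, eq_comm]
    split <;> simp_all


theorem aux_dep {k : ℕ} {D : Type*} [DivisionRing D] (M : Matrix (Fin k) (Fin k) D)
    (j : Fin k) :
    ∃ a : Fin (k+1) → D, (∃ r, a r ≠ 0) ∧
      ∀ i, ∑ r : Fin (k+1), (M ^ (r : ℕ)) i j * a r = 0 := by
  set w : Fin (k+1) → (Fin k → Dᵐᵒᵖ) := fun r i => op ((M ^ (r : ℕ)) i j) with hw
  have hnli : ¬ LinearIndependent Dᵐᵒᵖ w := by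
    intro h
    have := h.fintype_card_le_finrank
    rw [Module.finrank_fin_fun, Fintype.card_fin] at this
    omega
  obtain ⟨g, hg0, r0, hr0⟩ := Fintype.not_linearIndependent_iff.mp hnli
  refine ⟨fun r => unop (g r), ⟨r0, fun h => hr0 (by simpa using congrArg op h)⟩, ?_⟩
  intro i
  have := congrFun hg0 i
  simp only [Finset.sum_apply, Pi.smul_apply, smul_eq_mul, hw, Pi.zero_apply] at this
  have := congrArg unop this
  simpa [unop_sum, unop_mul] using this

theorem aux_rel {k : ℕ} {D : Type*} [DivisionRing D] (M : Matrix (Fin k) (Fin k) D)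
    (hM : ∀ c : Fin k → D, M.mulVec c = c → c = 0) (j : Fin k) :
    ∃ (d : ℕ) (a : ℕ → D), (∑ r ∈ Finset.range (d+1), a r) ≠ 0 ∧
      ∀ m, (fun i => ∑ r ∈ Finset.range (d+1), (M ^ (m+r)) i j * a r) = (0 : Fin k → D) := by
  -- first, a base relation from linear dependence
  obtain ⟨a0, ⟨r0, hr0⟩, hrel0⟩ := aux_dep M j
  -- shifted relations
  have hbase : ∀ m, (fun i => ∑ r ∈ Finset.range (k+1), (M ^ (m+r)) i j * (fun n => if h : n < k+1 then a0 ⟨n, h⟩ else 0) r) = (0 : Fin k → D) := by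
    intro m
    funext i
    have key : ∀ l, ∑ r ∈ Finset.range (k+1), (M ^ r) l j * (fun n => if h : n < k+1 then a0 ⟨n, h⟩ else 0) r = 0 := by
      intro l
      rw [Finset.sum_range fun n => (M ^ n) l j * _]
      simpa [Fin.is_le] using hrel0 l
    have expand : ∀ r, (M ^ (m+r)) i j = ∑ l, (M ^ m) i l * (M ^ r) l j := by
      intro r
      rw [pow_add, Matrix.mul_apply]
    simp only [Pi.zero_apply, expand]
    simp only [Finset.sum_mul, mul_assoc]
    rw [Finset.sum_comm]
    simp only [← Finset.mul_sum]
    rw [Finset.sum_congr rfl fun l _ => by rw [key l, mul_zero]]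
    simp
  set a1 : ℕ → D := fun n => if h : n < k+1 then a0 ⟨n, h⟩ else 0 with ha1
  have hex1 : ∃ r, a1 r ≠ 0 := ⟨r0, by simpa [ha1, r0.isLt, Fin.is_le] using hr0⟩
  have hsupp1 : ∀ r, k < r → a1 r = 0 := by
    intro r hr
    simp only [ha1]
    rw [dif_neg (by omega)]
  -- descent
  suffices H : ∀ N (a : ℕ → D), (∃ r, a r ≠ 0) → (∀ r, N < r → a r = 0) →
      (∀ m, (fun i => ∑ r ∈ Finset.range (N+1), (M ^ (m+r)) i j * a r) = (0 : Fin k → D)) →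
      ∃ (d : ℕ) (b : ℕ → D), (∑ r ∈ Finset.range (d+1), b r) ≠ 0 ∧
        ∀ m, (fun i => ∑ r ∈ Finset.range (d+1), (M ^ (m+r)) i j * b r) = (0 : Fin k → D) by
    exact H k a1 hex1 hsupp1 hbase
  intro N
  induction N with
  | zero =>
    intro a hex hsupp hrel
    by_cases hs : (∑ r ∈ Finset.range 1, a r) = 0
    · exfalso
      obtain ⟨r, hr⟩ := hex
      rcases Nat.eq_zero_or_pos r with h0 | h0
      · subst h0
        rw [Finset.sum_range_one] at hs
        exact hr hs
      · exact hr (hsupp r h0)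
    · exact ⟨0, a, hs, hrel⟩
  | succ N IH =>
    intro a hex hsupp hrel
    by_cases hs : (∑ r ∈ Finset.range (N+2), a r) = 0
    · set b : ℕ → D := fun r => ∑ s ∈ Finset.range (r+1), a s with hb
      apply IH b
      · by_contra hball
        push_neg at hball
        obtain ⟨r, hr⟩ := hex
        apply hr
        rcases Nat.eq_zero_or_pos r with h0 | h0
        · subst h0
          have := hball 0
          simpa [hb] using this
        · obtain ⟨r', rfl⟩ := Nat.exists_eq_add_of_lt h0
          have h1 := hball r'
          have h2 := hball (r' + 1)
          simp only [hb] at h1 h2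
          rw [Finset.sum_range_succ, h1] at h2
          simpa using h2
      · intro r hr
        simp only [hb]
        rw [← Finset.sum_subset (Finset.range_subset_range.mpr (by omega : N+2 ≤ r+1))
          (fun s _ hs' => hsupp s (by simp at hs'; omega))]
        exact hs
      · intro m
        set w : Fin k → D := fun i => ∑ r ∈ Finset.range (N+1), (M ^ (m+r)) i j * b r with hw
        have hMw : M.mulVec w = w := by
          funext i
          have hswap : (M.mulVec w) i = ∑ r ∈ Finset.range (N+1), (M ^ (m+r+1)) i j * b r := by
            simp only [Matrix.mulVec, dotProduct, hw, Finset.mul_sum, ← mul_assoc]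
            rw [Finset.sum_comm]
            refine Finset.sum_congr rfl fun r _ => ?_
            rw [← Finset.sum_mul]
            congr 1
            rw [pow_succ', Matrix.mul_apply]
          rw [hswap]
          have hbp := Finset.sum_range_by_parts (fun p => (M ^ (m+p)) i j) a (N+2)
          have hrelm := congrFun (hrel m) i
          simp only [Pi.zero_apply] at hrelm
          simp only [smul_eq_mul, show N + 2 - 1 = N + 1 from rfl] at hbp
          rw [hrelm, hs, mul_zero, zero_sub, eq_comm, neg_eq_zero] at hbp
          have expand : ∑ p ∈ Finset.range (N+1), ((M ^ (m+(p+1))) i j - (M ^ (m+p)) i j) * (∑ s ∈ Finset.range (p+1), a s) = (∑ p ∈ Finset.range (N+1), (M ^ (m+p+1)) i j * b p) - ∑ p ∈ Finset.range (N+1), (M ^ (m+p)) i j * b p := by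
            rw [← Finset.sum_sub_distrib]
            refine Finset.sum_congr rfl fun p _ => ?_
            rw [sub_mul]
            exact rfl
          rw [expand] at hbp
          have := sub_eq_zero.mp hbp
          rw [this]
        have := hM w hMw
        exact this
    · exact ⟨N+1, a, hs, hrel⟩


theorem aux_coeff {k : ℕ} {D : Type*} [DivisionRing D] (M : Matrix (Fin k) (Fin k) D)
    (S : Matrix (Fin k) (Fin k) (PowerSeries D))
    (hS2 : (1 - Matrix.of fun i j => PowerSeries.X * PowerSeries.C (M i j)) * S = 1) :
    ∀ (n : ℕ) (i j : Fin k), PowerSeries.coeff n (S i j) = (M ^ n) i j := by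
  have hent : ∀ i j : Fin k, S i j = (if i = j then (1 : PowerSeries D) else 0)
      + ∑ l, PowerSeries.X * PowerSeries.C (M i l) * S l j := by
    intro i j
    have h := congrFun (congrFun hS2 i) j
    simp only [Matrix.mul_apply, Matrix.sub_apply, Matrix.one_apply, Matrix.of_apply,
      sub_mul, Finset.sum_sub_distrib, ite_mul, one_mul, zero_mul] at h
    rw [Finset.sum_ite_eq] at h
    simp only [Finset.mem_univ, if_true] at h
    linear_combination (norm := abel) h
  intro n
  induction n with
  | zero =>
    intro i j
    rw [hent i j]
    simp only [map_add, map_sum]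
    have h0 : ∀ l : Fin k, (PowerSeries.coeff 0) (PowerSeries.X * PowerSeries.C (M i l) * S l j) = 0 :=
      fun l => by rw [mul_assoc, PowerSeries.coeff_zero_X_mul]
    rw [Finset.sum_congr rfl fun l _ => h0 l]
    simp [PowerSeries.coeff_one, Matrix.one_apply, apply_ite (PowerSeries.coeff 0)]
  | succ n ih =>
    intro i j
    rw [hent i j]
    simp only [map_add, map_sum]
    have h1 : (PowerSeries.coeff (n+1)) (if i = j then (1 : PowerSeries D) else 0) = 0 := by
      split <;> simp [PowerSeries.coeff_one]
    rw [h1, zero_add]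
    have h2 : ∀ l, (PowerSeries.coeff (n+1)) (PowerSeries.X * PowerSeries.C (M i l) * S l j)
        = M i l * (M ^ n) l j := by
      intro l
      rw [mul_assoc, PowerSeries.coeff_succ_X_mul, PowerSeries.coeff_C_mul, ih l j]
    rw [Finset.sum_congr rfl fun l _ => h2 l]
    rw [pow_succ', Matrix.mul_apply]


section Aux
variable {k : ℕ} {D : Type*} [DivisionRing D]

theorem aux_polycoeff (f : ℕ → D) (m n : ℕ) :
    (∑ r ∈ Finset.range m, Polynomial.monomial r (f r)).coeff n = if n < m then f n else 0 := by
  rw [Polynomial.finset_sum_coeff]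
  simp only [Polynomial.coeff_monomial]
  rw [Finset.sum_ite_eq']
  simp [Finset.mem_range]

theorem aux_polyeval (f : ℕ → D) (m : ℕ) :
    (∑ r ∈ Finset.range m, Polynomial.monomial r (f r)).eval 1 = ∑ r ∈ Finset.range m, f r := by
  rw [Polynomial.eval_finset_sum]
  simp [Polynomial.eval_monomial]

end Aux


/-- Let `D` be a division ring, `t` a central variable and `M ∈ D^{k×k}`.
If `M` does not have eigenvalue 1 (no nonzero column vector `c` with `Mc = c`), then
`1 − M` is invertible over `D` and the matrix `(1 − tM)⁻¹` is evaluable at `t = 1`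
with value `(1 − M)⁻¹`. -/
theorem stmt19 {k : ℕ} {D : Type*} [DivisionRing D] (M : Matrix (Fin k) (Fin k) D)
    (hM : ∀ c : Fin k → D, M.mulVec c = c → c = 0)
    (S : Matrix (Fin k) (Fin k) (PowerSeries D))
    (hS1 : S * (1 - Matrix.of fun i j => PowerSeries.X * PowerSeries.C (M i j)) = 1)
    (hS2 : (1 - Matrix.of fun i j => PowerSeries.X * PowerSeries.C (M i j)) * S = 1) :
    IsUnit (1 - M) ∧ ∀ i j, EvalAtOne (S i j) (Ring.inverse (1 - M) i j) := by

  have hA0 : ∀ c : Fin k → D, (1 - M).mulVec c = 0 → c = 0 := by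
    intro c hc
    apply hM
    rw [Matrix.sub_mulVec, Matrix.one_mulVec] at hc
    have := sub_eq_zero.mp hc
    exact this.symm
  obtain ⟨Nv, hN1, hN2⟩ := aux_isUnit (1 - M) hA0
  have hUnit : IsUnit (1 - M) := ⟨⟨1 - M, Nv, hN1, hN2⟩, rfl⟩
  have hNinv : Ring.inverse (1 - M) = Nv := by
    have h1 : Ring.inverse (1 - M) * (1 - M) = 1 := Ring.inverse_mul_cancel _ hUnit
    calc Ring.inverse (1 - M) = Ring.inverse (1 - M) * ((1 - M) * Nv) := by rw [hN1, mul_one]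
    _ = (Ring.inverse (1 - M) * (1 - M)) * Nv := by rw [mul_assoc]
    _ = Nv := by rw [h1, one_mul]
  refine ⟨hUnit, ?_⟩
  intro i j
  have hcoeff := aux_coeff M S hS2
  obtain ⟨d, a, hasum, harel⟩ := aux_rel M hM j
  set R : Polynomial D := ∑ r ∈ Finset.range (d+1), Polynomial.monomial r (a (d - r)) with hR
  have hRcoeff : ∀ n, R.coeff n = if n < d + 1 then a (d - n) else 0 := fun n => aux_polycoeff _ _ n
  have hReval : R.eval 1 = ∑ r ∈ Finset.range (d+1), a r := by
    rw [hR, aux_polyeval, ← Finset.sum_range_reflect (fun r => a r) (d+1)]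
    simp
  have hRne : R.eval 1 ≠ 0 := by rw [hReval]; exact hasum
  set qc : ℕ → D := fun n => ∑ r ∈ Finset.range (n+1), (M ^ r) i j * a (d - (n - r)) with hqc
  set Q : Polynomial D := ∑ n ∈ Finset.range d, Polynomial.monomial n (qc n) with hQ
  have hQcoeff : ∀ n, Q.coeff n = if n < d then qc n else 0 := fun n => aux_polycoeff _ _ n
  have hQeval : Q.eval 1 = ∑ n ∈ Finset.range d, qc n := aux_polyeval _ _
  refine ⟨Q, R, hRne, ?_, ?_⟩
  · -- product identity
    ext n
    rw [PowerSeries.coeff_mul, Finset.Nat.sum_antidiagonal_eq_sum_range_succ_mk]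
    simp only [PowerSeries.coeff_mk, hcoeff]
    by_cases hn : n < d
    · rw [hQcoeff n, if_pos hn]
      refine Finset.sum_congr rfl fun p hp => ?_
      rw [hRcoeff, if_pos (by simp at hp; omega)]
    · rw [hQcoeff n, if_neg hn]
      push_neg at hn
      have hsub : Finset.Ico (n - d) (n + 1) ⊆ Finset.range (n + 1) := by
        intro p hp
        simp only [Finset.mem_Ico] at hp
        simp only [Finset.mem_range]
        omega
      have hvan : ∀ p ∈ Finset.range (n + 1), p ∉ Finset.Ico (n - d) (n + 1) →
          (M ^ p) i j * R.coeff (n - p) = 0 := by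
        intro p hp hnp
        simp only [Finset.mem_range] at hp
        simp only [Finset.mem_Ico] at hnp
        rw [hRcoeff, if_neg (by omega), mul_zero]
      rw [← Finset.sum_subset hsub hvan, Finset.sum_Ico_eq_sum_range,
        show n + 1 - (n - d) = d + 1 by omega]
      have := congrFun (harel (n - d)) i
      simp only [Pi.zero_apply] at this
      rw [← this]
      refine Finset.sum_congr rfl fun q hq => ?_
      simp only [Finset.mem_range] at hq
      rw [show n - (n - d + q) = d - q by omega, hRcoeff, if_pos (by omega),
        show d - (d - q) = q by omega]
  · -- value
    rw [hNinv]
    suffices hkey : Nv i j * R.eval 1 = Q.eval 1 by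
      rw [← hkey, mul_assoc, mul_inv_cancel₀ hRne, mul_one]
    set Qc : ℕ → (Fin k → D) := fun n i' => ∑ r ∈ Finset.range (n+1), (M ^ r) i' j * a (d - (n - r)) with hQcv
    have hQcd : Qc d = 0 := by
      funext i'
      have h0 := congrFun (harel 0) i'
      simp only [Pi.zero_apply, zero_add] at h0
      simp only [Pi.zero_apply]
      rw [← h0]
      simp only [hQcv]
      refine Finset.sum_congr rfl fun r hr => ?_
      simp only [Finset.mem_range] at hr
      rw [show d - (d - r) = r by omega]
    have hstep : ∀ n, M.mulVec (Qc n) = fun i' => Qc (n+1) i' - (if i' = j then 1 else 0) * a (d - (n+1)) := by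
      intro n
      funext i'
      have hswap : (M.mulVec (Qc n)) i' = ∑ r ∈ Finset.range (n+1), (M ^ (r+1)) i' j * a (d - (n - r)) := by
        simp only [Matrix.mulVec, dotProduct, hQcv, Finset.mul_sum, ← mul_assoc]
        rw [Finset.sum_comm]
        refine Finset.sum_congr rfl fun r _ => ?_
        rw [← Finset.sum_mul]
        congr 1
        rw [pow_succ', Matrix.mul_apply]
      rw [hswap]
      have hexp : Qc (n+1) i' = (∑ r ∈ Finset.range (n+1), (M ^ (r+1)) i' j * a (d - (n - r)))
          + (if i' = j then 1 else 0) * a (d - (n+1)) := by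
        simp only [hQcv]
        rw [Finset.sum_range_succ' (fun r => (M ^ r) i' j * a (d - (n + 1 - r))) (n+1)]
        simp only [Nat.succ_sub_succ, pow_zero, Matrix.one_apply, Nat.sub_zero]
      rw [hexp, add_sub_cancel_right]
    set W : Fin k → D := fun i' => ∑ n ∈ Finset.range d, Qc n i' with hW
    have hMW : M.mulVec W = fun i' => ∑ n ∈ Finset.range d, (M.mulVec (Qc n)) i' := by
      funext i'
      simp only [Matrix.mulVec, dotProduct, hW, Finset.mul_sum]
      exact Finset.sum_comm
    have hkey2 : (1 - M).mulVec W = fun i' => (if i' = j then 1 else 0) * R.eval 1 := by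
      funext i'
      rw [Matrix.sub_mulVec, Matrix.one_mulVec, Pi.sub_apply, hMW]
      simp only [hstep]
      rw [Finset.sum_sub_distrib]
      have hW' : W i' = ∑ n ∈ Finset.range d, Qc n i' := rfl
      have habel : W i' - (∑ n ∈ Finset.range d, Qc (n+1) i'
          - ∑ n ∈ Finset.range d, (if i' = j then 1 else 0) * a (d - (n+1)))
          = (∑ n ∈ Finset.range d, Qc n i' - ∑ n ∈ Finset.range d, Qc (n+1) i')
            + ∑ n ∈ Finset.range d, (if i' = j then 1 else 0) * a (d - (n+1)) := by
        rw [hW']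
        abel
      rw [habel, ← Finset.sum_sub_distrib, Finset.sum_range_sub' (fun n => Qc n i') d]
      have hQc0 : Qc 0 i' = (if i' = j then 1 else 0) * a d := by
        simp only [hQcv]
        rw [Finset.sum_range_one, pow_zero, Matrix.one_apply]
        norm_num
      rw [hQc0, congrFun hQcd i', ← Finset.mul_sum]
      have hrefl : ∑ n ∈ Finset.range d, a (d - (n+1)) = ∑ n ∈ Finset.range d, a n := by
        rw [← Finset.sum_range_reflect (fun n => a n) d]
        refine Finset.sum_congr rfl fun n hn => ?_
        congr 1
        omega
      rw [hrefl, hReval, Finset.sum_range_succ]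
      rw [Pi.zero_apply, sub_zero, mul_add]
      rw [add_comm]
    have hfin : W = fun i' => Nv i' j * R.eval 1 := by
      have h1 : Nv.mulVec ((1 - M).mulVec W) = W := by
        rw [Matrix.mulVec_mulVec, hN2, Matrix.one_mulVec]
      rw [hkey2] at h1
      rw [← h1]
      funext i'
      simp only [Matrix.mulVec, dotProduct]
      have : ∀ l : Fin k, Nv i' l * ((if l = j then 1 else 0) * R.eval 1)
          = (if l = j then Nv i' l else 0) * R.eval 1 := by
        intro l
        split <;> simp
      rw [Finset.sum_congr rfl fun l _ => this l, ← Finset.sum_mul, Finset.sum_ite_eq']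
      simp
    have hWi : W i = ∑ n ∈ Finset.range d, qc n := rfl
    rw [hQeval, ← congrFun hfin i]
end
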